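/- arXiv:1602.00061 — 7 statements merged into one kernel-verified Lean document; each statement's English description precedes it below -/
import Mathlib

section
/- Let X be an n×d random matrix whose entries are i.i.d. real random variables with mean 0, variance 1, and finite absolute moments of every order, let T be a symmetric d×d real matrix, and set A = X T Xᵀ. Then for every k-cycle σ = (σ_1,…,σ_k) (a sequence of k distinct indices in {1,…,n}), the expectation E[∏_{i=1}^k A_{σ_i, σ_{(i mod k)+1}}] equals trace(T^k). -/
open MeasureTheory ProbabilityTheory Matrix

section Helpers

/-- Counting version of product over a composition. -/
lemma prod_comp_count {ι α M : Type*} [Fintype ι] [Fintype α] [DecidableEq α] [CommMonoid M]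
    (f : ι → α) (x : α → M) :
    ∏ i, x (f i) = ∏ p, x p ^ (Finset.univ.filter (fun i => f i = p)).card := by
  rw [← Finset.prod_fiberwise Finset.univ f (fun i => x (f i))]
  refine Finset.prod_congr rfl fun p _ => ?_
  rw [Finset.prod_congr rfl (fun i hi => by rw [(Finset.mem_filter.mp hi).2] :
      ∀ i ∈ Finset.univ.filter (fun i => f i = p), x (f i) = x p), Finset.prod_const]

/-- Integral of a product of independent, integrable random variables. -/
lemma integral_prod_of_iIndep {Ω : Type*} [MeasurableSpace Ω] {μ : Measure Ω}
    [IsProbabilityMeasure μ] {ι : Type*} (f : ι → Ω → ℝ)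
    (hindep : iIndepFun f μ)
    (hm : ∀ i, Measurable (f i)) (hi : ∀ i, Integrable (f i) μ) (s : Finset ι) :
    Integrable (fun ω => ∏ i ∈ s, f i ω) μ ∧
      (∫ ω, ∏ i ∈ s, f i ω ∂μ) = ∏ i ∈ s, ∫ ω, f i ω ∂μ := by
  classical
  induction s using Finset.induction with
  | empty => simp [integrable_const]
  | @insert a s ha ih =>
    have hdep : IndepFun (∏ j ∈ s, f j) (f a) μ :=
      hindep.indepFun_finsetProd_of_notMem hm ha
    have hps : (fun ω => ∏ i ∈ s, f i ω) = ∏ j ∈ s, f j := by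
      funext ω; simp [Finset.prod_apply]
    have hint : Integrable ((∏ j ∈ s, f j) * f a) μ :=
      hdep.integrable_mul (hps ▸ ih.1) (hi a)
    constructor
    · refine hint.congr (Filter.Eventually.of_forall fun ω => ?_)
      simp [Finset.prod_insert ha, Finset.prod_apply, mul_comm]
    · have := hdep.integral_mul_eq_mul_integral (hps ▸ ih.1).aestronglyMeasurable (hi a).aestronglyMeasurable
      calc (∫ ω, ∏ i ∈ insert a s, f i ω ∂μ)
          = ∫ ω, ((∏ j ∈ s, f j) * f a) ω ∂μ := by
            refine integral_congr_ae (Filter.Eventually.of_forall fun ω => ?_)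
            simp [Finset.prod_insert ha, Finset.prod_apply, mul_comm]
        _ = (∫ ω, (∏ j ∈ s, f j) ω ∂μ) * ∫ ω, f a ω ∂μ := this
        _ = ∏ i ∈ insert a s, ∫ ω, f i ω ∂μ := by
            rw [Finset.prod_insert ha, ← hps, mul_comm]; exact congrArg _ ih.2

lemma pow_apply_chain {d : ℕ} (T : Matrix (Fin d) (Fin d) ℝ) :
    ∀ (m : ℕ) (r c : Fin d),
      (T ^ (m + 1)) r c = ∑ f : Fin m → Fin d,
        (∏ i : Fin m, T ((Fin.cons r f : Fin (m+1) → Fin d) (Fin.castSucc i))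
            ((Fin.cons r f : Fin (m+1) → Fin d) i.succ))
          * T ((Fin.cons r f : Fin (m+1) → Fin d) (Fin.last m)) c := by
  intro m
  induction m with
  | zero =>
    intro r c
    simp [pow_one]
  | succ m ih =>
    intro r c
    have h1 : (T ^ (m + 1 + 1)) r c = ∑ b, (T ^ (m + 1)) r b * T b c := by
      rw [pow_succ, Matrix.mul_apply]
    rw [h1]
    rw [← Equiv.sum_comp (Fin.snocEquiv (fun _ : Fin (m+1) => Fin d))
      (fun f : Fin (m+1) → Fin d =>
        (∏ i : Fin (m + 1), T ((Fin.cons r f : Fin (m+2) → Fin d) (Fin.castSucc i))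
            ((Fin.cons r f : Fin (m+2) → Fin d) i.succ))
          * T ((Fin.cons r f : Fin (m+2) → Fin d) (Fin.last (m+1))) c)]
    rw [Fintype.sum_prod_type]
    refine Finset.sum_congr rfl fun b _ => ?_
    rw [ih r b, Finset.sum_mul]
    refine Finset.sum_congr rfl fun f _ => ?_
    show _ = (∏ i : Fin (m + 1), T ((Fin.cons r (Fin.snoc f b) : Fin (m+2) → Fin d) (Fin.castSucc i)) ((Fin.cons r (Fin.snoc f b) : Fin (m+2) → Fin d) i.succ)) * T ((Fin.cons r (Fin.snoc f b) : Fin (m+2) → Fin d) (Fin.last (m+1))) c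
    have hq : (Fin.cons r (Fin.snoc f b) : Fin (m + 2) → Fin d)
        = Fin.snoc (Fin.cons r f) b := Fin.cons_snoc_eq_snoc_cons r f b
    rw [hq]
    rw [Fin.prod_univ_castSucc]
    simp only [Fin.snoc_castSucc, Fin.succ_castSucc, Fin.snoc_last, Fin.succ_last]

lemma trace_pow_eq_sum_cycle {d m : ℕ} (T : Matrix (Fin d) (Fin d) ℝ) :
    (T ^ (m + 1)).trace = ∑ a : Fin (m + 1) → Fin d, ∏ i : Fin (m + 1), T (a i) (a (i + 1)) := by
  rw [Matrix.trace]
  rw [← Equiv.sum_comp (Fin.consEquiv (fun _ : Fin (m+1) => Fin d))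
    (fun a : Fin (m+1) → Fin d => ∏ i : Fin (m + 1), T (a i) (a (i + 1)))]
  rw [Fintype.sum_prod_type]
  refine Finset.sum_congr rfl fun r _ => ?_
  rw [Matrix.diag_apply, pow_apply_chain T m r r]
  simp only [Fin.consEquiv_apply]
  refine Finset.sum_congr rfl fun f _ => ?_
  show (∏ i : Fin m, T ((Fin.cons r f : Fin (m+1) → Fin d) (Fin.castSucc i))
        ((Fin.cons r f : Fin (m+1) → Fin d) i.succ))
      * T ((Fin.cons r f : Fin (m+1) → Fin d) (Fin.last m)) r
    = ∏ i : Fin (m+1), T ((Fin.cons r f : Fin (m+1) → Fin d) i)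
        ((Fin.cons r f : Fin (m+1) → Fin d) (i + 1))
  rw [Fin.prod_univ_castSucc]
  simp only [Fin.coeSucc_eq_succ, Fin.last_add_one, Fin.cons_zero]

end Helpers

/-- For an `n × d` random matrix `X` with i.i.d. entries of mean `0`,
variance `1` and finite absolute moments of every order, a symmetric `d × d` real matrix `T`,
and `A = X * T * Xᵀ`, the expectation of the cycle product
`∏_{i=1}^k A_{σ i, σ (i+1)}` (indices cyclic) over any `k`-cycle `σ` (an injective tuple of
row indices) equals `trace (T ^ k)`. -/
theorem stmt_0
    {Ω : Type*} [MeasurableSpace Ω] {μ : Measure Ω} [IsProbabilityMeasure μ]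
    {n d k : ℕ} [NeZero k]
    (X : Ω → Matrix (Fin n) (Fin d) ℝ)
    (hmeas : ∀ i j, Measurable fun ω => X ω i j)
    (hindep : iIndepFun
      (fun (p : Fin n × Fin d) ω => X ω p.1 p.2) μ)
    (ν : Measure ℝ) [IsProbabilityMeasure ν]
    (hid : ∀ i j, Measure.map (fun ω => X ω i j) μ = ν)
    (hmom : ∀ m : ℕ, Integrable (fun x : ℝ => |x| ^ m) ν)
    (hmean : (∫ x, x ∂ν) = 0)
    (hvar : (∫ x, x ^ 2 ∂ν) = 1)
    (T : Matrix (Fin d) (Fin d) ℝ) (hT : T.IsSymm)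
    (σ : Fin k → Fin n) (hσ : Function.Injective σ) :
    (∫ ω, ∏ i : Fin k, (X ω * T * (X ω)ᵀ) (σ i) (σ (i + 1)) ∂μ)
      = (T ^ k).trace := by
  classical
  obtain ⟨m, rfl⟩ : ∃ m, k = m + 1 :=
    ⟨k - 1, (Nat.succ_pred_eq_of_pos (Nat.pos_of_neZero k)).symm⟩
  set Y : Fin n × Fin d → Ω → ℝ := fun p ω => X ω p.1 p.2 with hY
  have hYmeas : ∀ p : Fin n × Fin d, Measurable (Y p) := fun p => hmeas p.1 p.2
  have hmap : ∀ p : Fin n × Fin d, Measure.map (Y p) μ = ν := fun p => hid p.1 p.2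
  have hMint : ∀ j : ℕ, Integrable (fun x : ℝ => x ^ j) ν := by
    intro j
    refine (hmom j).mono' (measurable_id.pow_const j).aestronglyMeasurable
      (Filter.Eventually.of_forall fun x => ?_)
    simp [abs_pow, Real.norm_eq_abs]
  have hInt : ∀ (p : Fin n × Fin d) (j : ℕ), Integrable (fun ω => Y p ω ^ j) μ := by
    intro p j
    have h1 : Integrable (fun x : ℝ => x ^ j) (Measure.map (Y p) μ) := by
      rw [hmap p]; exact hMint j
    exact (integrable_map_measure h1.aestronglyMeasurable (hYmeas p).aemeasurable).mp h1
  have hEint : ∀ (p : Fin n × Fin d) (j : ℕ), (∫ x, x ^ j ∂ν) = ∫ ω, Y p ω ^ j ∂μ := by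
    intro p j
    rw [← hmap p]
    exact integral_map (hYmeas p).aemeasurable (measurable_id.pow_const j).aestronglyMeasurable
  have hM : ∀ j : ℕ, j = 0 ∨ j = 2 → (∫ x, x ^ j ∂ν) = 1 := by
    rintro j (rfl | rfl)
    · simp
    · exact hvar
  have hM1 : (∫ x, x ^ 1 ∂ν) = 0 := by simpa using hmean
  set mult : (Fin (m+1) → Fin d × Fin d) → Fin n × Fin d → ℕ := fun g p =>
    (Finset.univ.filter (fun i => (σ i, (g i).1) = p)).card +
    (Finset.univ.filter (fun i => (σ (i + 1), (g i).2) = p)).card with hmult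
  -- pointwise expansion
  have hpt : ∀ ω, (∏ i : Fin (m+1), (X ω * T * (X ω)ᵀ) (σ i) (σ (i + 1)))
      = ∑ g : Fin (m+1) → Fin d × Fin d,
          (∏ i, T (g i).1 (g i).2) * ∏ p : Fin n × Fin d, Y p ω ^ mult g p := by
    intro ω
    have hentry : ∀ r c, (X ω * T * (X ω)ᵀ) r c
        = ∑ p : Fin d × Fin d, X ω r p.1 * T p.1 p.2 * X ω c p.2 := by
      intro r c
      rw [Matrix.mul_apply]
      simp_rw [Matrix.mul_apply, Matrix.transpose_apply, Finset.sum_mul]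
      rw [← Finset.univ_product_univ, Finset.sum_product]
      exact Finset.sum_comm
    simp_rw [hentry]
    rw [Finset.prod_univ_sum, Fintype.piFinset_univ]
    refine Finset.sum_congr rfl fun g _ => ?_
    calc (∏ i, X ω (σ i) (g i).1 * T (g i).1 (g i).2 * X ω (σ (i+1)) (g i).2)
        = (∏ i, T (g i).1 (g i).2) *
            ((∏ i, Y (σ i, (g i).1) ω) * (∏ i, Y (σ (i+1), (g i).2) ω)) := by
          rw [← Finset.prod_mul_distrib, ← Finset.prod_mul_distrib]
          exact Finset.prod_congr rfl fun i _ => by rw [hY]; ring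
      _ = (∏ i, T (g i).1 (g i).2) * ∏ p, Y p ω ^ mult g p := by
          rw [prod_comp_count (fun i : Fin (m+1) => (σ i, (g i).1)) (fun p => Y p ω),
              prod_comp_count (fun i : Fin (m+1) => (σ (i+1), (g i).2)) (fun p => Y p ω),
              ← Finset.prod_mul_distrib]
          simp_rw [← pow_add]
          rfl
  -- independence & integrability of the per-entry powers
  have hprod : ∀ g : Fin (m+1) → Fin d × Fin d,
      Integrable (fun ω => ∏ p : Fin n × Fin d, Y p ω ^ mult g p) μ ∧
      (∫ ω, ∏ p : Fin n × Fin d, Y p ω ^ mult g p ∂μ)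
        = ∏ p : Fin n × Fin d, ∫ ω, Y p ω ^ mult g p ∂μ := by
    intro g
    have hcomp : iIndepFun
        (fun p ω => Y p ω ^ mult g p) μ :=
      hindep.comp (fun p x => x ^ mult g p) (fun p => measurable_id.pow_const _)
    have h := integral_prod_of_iIndep (fun p ω => Y p ω ^ mult g p) hcomp
      (fun p => (hYmeas p).pow_const _) (fun p => hInt p _) Finset.univ
    exact h
  -- multiplicity computations
  have hc1 : ∀ (g : Fin (m+1) → Fin d × Fin d) (t : Fin (m+1)) (c : Fin d),
      (Finset.univ.filter (fun i : Fin (m+1) => (σ i, (g i).1) = (σ t, c))).card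
        = if (g t).1 = c then 1 else 0 := by
    intro g t c
    split_ifs with h
    · rw [Finset.card_eq_one]
      refine ⟨t, ?_⟩
      ext j
      simp only [Finset.mem_filter, Finset.mem_univ, true_and, Prod.mk.injEq,
        Finset.mem_singleton]
      constructor
      · rintro ⟨h1, _⟩; exact hσ h1
      · rintro rfl; exact ⟨rfl, h⟩
    · rw [Finset.card_eq_zero, Finset.filter_eq_empty_iff]
      intro j _
      simp only [Prod.mk.injEq, not_and]
      intro h1 h2
      apply h; rw [← hσ h1]; exact h2
  have hc2 : ∀ (g : Fin (m+1) → Fin d × Fin d) (t : Fin (m+1)) (c : Fin d),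
      (Finset.univ.filter (fun i : Fin (m+1) => (σ (i + 1), (g i).2) = (σ t, c))).card
        = if (g (t - 1)).2 = c then 1 else 0 := by
    intro g t c
    split_ifs with h
    · rw [Finset.card_eq_one]
      refine ⟨t - 1, ?_⟩
      ext j
      simp only [Finset.mem_filter, Finset.mem_univ, true_and, Prod.mk.injEq,
        Finset.mem_singleton]
      constructor
      · rintro ⟨h1, _⟩; exact eq_sub_of_add_eq (hσ h1)
      · rintro rfl; exact ⟨by rw [sub_add_cancel], h⟩
    · rw [Finset.card_eq_zero, Finset.filter_eq_empty_iff]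
      intro j _
      simp only [Prod.mk.injEq, not_and]
      intro h1 h2
      apply h; rw [← eq_sub_of_add_eq (hσ h1)]; exact h2
  have hmtc : ∀ (g : Fin (m+1) → Fin d × Fin d) (t : Fin (m+1)) (c : Fin d),
      mult g (σ t, c)
        = (if (g t).1 = c then 1 else 0) + (if (g (t - 1)).2 = c then 1 else 0) := by
    intro g t c
    rw [hmult]
    show (Finset.univ.filter (fun i : Fin (m+1) => (σ i, (g i).1) = (σ t, c))).card
      + (Finset.univ.filter (fun i : Fin (m+1) => (σ (i + 1), (g i).2) = (σ t, c))).card = _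
    rw [hc1 g t c, hc2 g t c]
  have hm0 : ∀ (g : Fin (m+1) → Fin d × Fin d) (p : Fin n × Fin d),
      (∀ t, σ t ≠ p.1) → mult g p = 0 := by
    intro g p hp
    have e1 : (Finset.univ.filter (fun i : Fin (m+1) => (σ i, (g i).1) = p)) = ∅ := by
      rw [Finset.filter_eq_empty_iff]
      intro j _
      intro hc
      exact hp j (by rw [← hc])
    have e2 : (Finset.univ.filter (fun i : Fin (m+1) => (σ (i+1), (g i).2) = p)) = ∅ := by
      rw [Finset.filter_eq_empty_iff]
      intro j _
      intro hc
      exact hp (j+1) (by rw [← hc])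
    rw [hmult]
    show (Finset.univ.filter (fun i : Fin (m+1) => (σ i, (g i).1) = p)).card
      + (Finset.univ.filter (fun i : Fin (m+1) => (σ (i + 1), (g i).2) = p)).card = 0
    rw [e1, e2]; simp
  -- evaluation of the moment products
  have hIg1 : ∀ g : Fin (m+1) → Fin d × Fin d, (∀ i, (g (i+1)).1 = (g i).2) →
      (∏ p : Fin n × Fin d, ∫ x, x ^ mult g p ∂ν) = 1 := by
    intro g hg
    refine Finset.prod_eq_one fun p _ => ?_
    by_cases hr : ∃ t, σ t = p.1
    · obtain ⟨t, ht⟩ := hr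
      have hp : p = (σ t, p.2) := by rw [ht]
      rw [hp, hmtc g t p.2]
      have heq : (g t).1 = (g (t-1)).2 := by
        have := hg (t-1); rwa [sub_add_cancel] at this
      by_cases h2 : (g t).1 = p.2
      · rw [if_pos h2, if_pos (by rw [← heq]; exact h2)]
        exact hM 2 (Or.inr rfl)
      · rw [if_neg h2, if_neg (by rw [← heq]; exact h2)]
        exact hM 0 (Or.inl rfl)
    · push_neg at hr
      rw [hm0 g p hr]
      exact hM 0 (Or.inl rfl)
  have hIg0 : ∀ g : Fin (m+1) → Fin d × Fin d, ¬ (∀ i, (g (i+1)).1 = (g i).2) →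
      (∏ p : Fin n × Fin d, ∫ x, x ^ mult g p ∂ν) = 0 := by
    intro g hg
    push_neg at hg
    obtain ⟨i, hi⟩ := hg
    refine Finset.prod_eq_zero (Finset.mem_univ ((σ (i+1), (g i).2) : Fin n × Fin d)) ?_
    rw [hmtc g (i+1) (g i).2, if_neg hi, if_pos (by rw [add_sub_cancel_right])]
    simpa using hM1
  -- main computation
  calc (∫ ω, ∏ i : Fin (m+1), (X ω * T * (X ω)ᵀ) (σ i) (σ (i + 1)) ∂μ)
      = ∫ ω, ∑ g : Fin (m+1) → Fin d × Fin d,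
          (∏ i, T (g i).1 (g i).2) * ∏ p : Fin n × Fin d, Y p ω ^ mult g p ∂μ :=
        integral_congr_ae (Filter.Eventually.of_forall hpt)
    _ = ∑ g : Fin (m+1) → Fin d × Fin d,
          ∫ ω, (∏ i, T (g i).1 (g i).2) * ∏ p : Fin n × Fin d, Y p ω ^ mult g p ∂μ := by
        refine integral_finset_sum _ fun g _ => ?_
        exact ((hprod g).1).const_mul _
    _ = ∑ g : Fin (m+1) → Fin d × Fin d,
          (∏ i, T (g i).1 (g i).2) * ∏ p : Fin n × Fin d, ∫ x, x ^ mult g p ∂ν := by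
        refine Finset.sum_congr rfl fun g _ => ?_
        rw [integral_const_mul, (hprod g).2]
        exact congrArg _ (Finset.prod_congr rfl fun p _ => (hEint p _).symm)
    _ = ∑ g ∈ Finset.univ.filter
          (fun g : Fin (m+1) → Fin d × Fin d => ∀ i, (g (i+1)).1 = (g i).2),
          (∏ i, T (g i).1 (g i).2) := by
        rw [Finset.sum_filter]
        refine Finset.sum_congr rfl fun g _ => ?_
        by_cases hg : ∀ i, (g (i+1)).1 = (g i).2
        · rw [if_pos hg, hIg1 g hg, mul_one]
        · rw [if_neg hg, hIg0 g hg, mul_zero]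
    _ = ∑ a : Fin (m+1) → Fin d, ∏ i, T (a i) (a (i + 1)) := by
        refine Finset.sum_nbij' (fun g => fun i => (g i).1)
          (fun a => fun i => (a i, a (i+1))) (fun g hg => Finset.mem_univ _)
          (fun a ha => ?_) (fun g hg => ?_) (fun a ha => rfl) (fun g hg => ?_)
        · simp
        · funext i
          simp only [Finset.mem_filter, Finset.mem_univ, true_and] at hg
          exact Prod.ext rfl (hg i)
        · simp only [Finset.mem_filter, Finset.mem_univ, true_and] at hg
          exact Finset.prod_congr rfl fun i _ => by show T (g i).1 (g i).2 = T (g i).1 (g (i+1)).1; rw [hg i]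
    _ = (T ^ (m+1)).trace := (trace_pow_eq_sum_cycle T).symm
end

section
/- Let A be an n×n real matrix and let G be the strictly upper triangular part of A (i.e., G_{ij} = A_{ij} if i < j and G_{ij} = 0 otherwise). Then for every integer k ≥ 1, trace(G^{k-1} A) equals the sum, over all increasing k-cycles σ (sequences σ_1 < σ_2 < … < σ_k of indices in {1,…,n}), of the products A_σ = ∏_{i=1}^k A_{σ_i,σ_{i+1}} (with σ_{k+1} = σ_1). -/
open Matrix

open Classical in
lemma aux {n : ℕ} (A G : Matrix (Fin n) (Fin n) ℝ)
    (hG : ∀ i j, G i j = if i < j then A i j else 0) :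
    ∀ (m : ℕ) (i j : Fin n), (G ^ m) i j
      = ∑ σ ∈ Finset.univ.filter (fun σ : Fin (m+1) → Fin n =>
          StrictMono σ ∧ σ 0 = i ∧ σ (Fin.last m) = j),
          ∏ t : Fin m, A (σ t.castSucc) (σ t.succ) := by
  intro m
  induction m with
  | zero =>
    intro i j
    simp only [pow_zero, Matrix.one_apply, Finset.prod_of_isEmpty]
    by_cases h : i = j
    · subst h
      rw [if_pos rfl]
      have he : Finset.univ.filter (fun σ : Fin 1 → Fin n =>
            StrictMono σ ∧ σ 0 = i ∧ σ (Fin.last 0) = i) = {fun _ => i} := by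
        ext σ
        simp only [Finset.mem_filter, Finset.mem_univ, true_and, Finset.mem_singleton]
        constructor
        · rintro ⟨-, h0, -⟩
          funext x
          rw [Subsingleton.elim x 0, h0]
        · rintro rfl
          exact ⟨Subsingleton.strictMono _, rfl, rfl⟩
      rw [he, Finset.sum_singleton]
    · rw [if_neg h]
      refine (Finset.sum_eq_zero fun σ hσ => ?_).symm
      simp only [Finset.mem_filter] at hσ
      exact absurd (hσ.2.2.1 ▸ hσ.2.2.2 ▸ rfl) h
  | succ m ih =>
    intro i j
    rw [pow_succ', Matrix.mul_apply]
    have L : ∑ x, G i x * (G ^ m) x j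
        = ∑ τ ∈ Finset.univ.filter (fun τ : Fin (m+1) → Fin n =>
            i < τ 0 ∧ StrictMono τ ∧ τ (Fin.last m) = j),
            A i (τ 0) * ∏ t : Fin m, A (τ t.castSucc) (τ t.succ) := by
      simp only [hG, ih, Finset.mul_sum]
      have step1 : ∀ x : Fin n,
          (∑ τ ∈ Finset.univ.filter (fun τ : Fin (m+1) → Fin n =>
              StrictMono τ ∧ τ 0 = x ∧ τ (Fin.last m) = j),
            (if i < x then A i x else 0) * ∏ t : Fin m, A (τ t.castSucc) (τ t.succ))
          = ∑ τ ∈ (Finset.univ.filter (fun τ : Fin (m+1) → Fin n =>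
              StrictMono τ ∧ τ (Fin.last m) = j)).filter (fun τ => τ 0 = x),
            (if i < τ 0 then A i (τ 0) else 0) * ∏ t : Fin m, A (τ t.castSucc) (τ t.succ) := by
        intro x
        rw [Finset.filter_filter]
        refine Finset.sum_congr (by ext τ; simp only [Finset.mem_filter]; tauto) ?_
        intro τ hτ
        simp only [Finset.mem_filter] at hτ
        rw [hτ.2.2]
      simp only [step1]
      rw [Finset.sum_fiberwise]
      simp only [ite_mul, zero_mul, ← Finset.sum_filter, Finset.filter_filter]
      refine Finset.sum_congr (by ext τ; simp only [Finset.mem_filter]; tauto) fun _ _ => rfl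
    rw [L]
    refine Finset.sum_nbij' (fun τ => Fin.cons i τ) (fun σ => Fin.tail σ) ?_ ?_ ?_ ?_ ?_
    · intro τ hτ
      simp only [Finset.mem_filter, Finset.mem_univ, true_and] at hτ ⊢
      obtain ⟨h0, hsm, hl⟩ := hτ
      refine ⟨?_, Fin.cons_zero _ _, ?_⟩
      · rw [Fin.strictMono_iff_lt_succ]
        intro t
        refine Fin.cases ?_ (fun s => ?_) t
        · simpa using h0
        · rw [← Fin.succ_castSucc]
          simpa [Fin.cons_succ] using (Fin.strictMono_iff_lt_succ.mp hsm) s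
      · rw [← Fin.succ_last, Fin.cons_succ, hl]
    · intro σ hσ
      simp only [Finset.mem_filter, Finset.mem_univ, true_and] at hσ ⊢
      obtain ⟨hsm, h0, hl⟩ := hσ
      refine ⟨?_, hsm.comp (Fin.strictMono_succ), ?_⟩
      · rw [← h0]; exact hsm (Fin.succ_pos 0)
      · show σ (Fin.last m).succ = j
        rw [Fin.succ_last, hl]
    · intro τ _; exact Fin.tail_cons _ _
    · intro σ hσ
      simp only [Finset.mem_filter] at hσ
      rw [← hσ.2.2.1]; exact Fin.cons_self_tail σ
    · intro τ hτ
      rw [Fin.prod_univ_succ]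
      refine congrArg₂ (· * ·) ?_ (Finset.prod_congr rfl fun t _ => ?_)
      · simp [Fin.cons_succ]
      · rw [← Fin.succ_castSucc]; simp [Fin.cons_succ]

open Classical in
/-- For an `n × n` real matrix `A` with strictly upper triangular part `G`,
and any `k ≥ 1`, `trace (G ^ (k-1) * A)` equals the sum over all increasing `k`-cycles
`σ_1 < σ_2 < … < σ_k` of the cycle products `∏_{i=1}^k A_{σ i, σ (i+1)}` (indices cyclic). -/
theorem stmt_2 {n k : ℕ} [NeZero k]
    (A G : Matrix (Fin n) (Fin n) ℝ)
    (hG : ∀ i j, G i j = if i < j then A i j else 0) :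
    (G ^ (k - 1) * A).trace
      = ∑ σ ∈ Finset.univ.filter (fun σ : Fin k → Fin n => StrictMono σ),
          ∏ i : Fin k, A (σ i) (σ (i + 1)) := by
  obtain ⟨m, rfl⟩ : ∃ m, k = m + 1 := Nat.exists_eq_succ_of_ne_zero (NeZero.ne k)
  simp only [Nat.add_sub_cancel]
  have key : ∀ i j : Fin n, (G ^ m) i j * A j i
      = ∑ σ ∈ Finset.univ.filter (fun σ : Fin (m+1) → Fin n =>
          StrictMono σ ∧ σ 0 = i ∧ σ (Fin.last m) = j),
          (∏ t : Fin m, A (σ t.castSucc) (σ t.succ)) * A (σ (Fin.last m)) (σ 0) := by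
    intro i j
    rw [aux A G hG m i j, Finset.sum_mul]
    refine Finset.sum_congr rfl fun σ hσ => ?_
    simp only [Finset.mem_filter] at hσ
    rw [hσ.2.2.1, hσ.2.2.2]
  have tr : (G ^ m * A).trace = ∑ i, ∑ j, (G ^ m) i j * A j i := by
    rw [Matrix.trace]
    exact Finset.sum_congr rfl fun i _ => by rw [Matrix.diag_apply, Matrix.mul_apply]
  rw [tr]
  simp only [key]
  have inner : ∀ i : Fin n, (∑ j, ∑ σ ∈ Finset.univ.filter (fun σ : Fin (m+1) → Fin n =>
          StrictMono σ ∧ σ 0 = i ∧ σ (Fin.last m) = j),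
          (∏ t : Fin m, A (σ t.castSucc) (σ t.succ)) * A (σ (Fin.last m)) (σ 0))
      = ∑ σ ∈ Finset.univ.filter (fun σ : Fin (m+1) → Fin n => StrictMono σ ∧ σ 0 = i),
          (∏ t : Fin m, A (σ t.castSucc) (σ t.succ)) * A (σ (Fin.last m)) (σ 0) := by
    intro i
    rw [← Finset.sum_fiberwise (Finset.univ.filter (fun σ : Fin (m+1) → Fin n =>
        StrictMono σ ∧ σ 0 = i)) (fun σ => σ (Fin.last m))]
    refine Finset.sum_congr rfl fun j _ => Finset.sum_congr ?_ fun _ _ => rfl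
    rw [Finset.filter_filter]
    ext σ; simp only [Finset.mem_filter]; tauto
  simp only [inner]
  rw [← Finset.sum_fiberwise (Finset.univ.filter (fun σ : Fin (m+1) → Fin n =>
      StrictMono σ)) (fun σ => σ 0)]
  have outer : ∀ i : Fin n,
      (Finset.univ.filter (fun σ : Fin (m+1) → Fin n => StrictMono σ ∧ σ 0 = i))
      = (Finset.univ.filter (fun σ : Fin (m+1) → Fin n => StrictMono σ)).filter
          (fun σ => σ 0 = i) := by
    intro i; rw [Finset.filter_filter]
  simp only [outer]
  refine Finset.sum_congr rfl fun i _ => Finset.sum_congr rfl fun σ _ => ?_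
  rw [Fin.prod_univ_castSucc]
  refine congrArg₂ (· * ·) (Finset.prod_congr rfl fun t _ => ?_) ?_
  · rw [Fin.coeSucc_eq_succ]
  · rw [Fin.last_add_one]
end

section
/- For every even integer k ≥ 4 there exist Borel probability measures p and q on ℝ, each supported on at most k/2 points of the interval [−1, 1], such that ∫ x^ℓ dp(x) = ∫ x^ℓ dq(x) for every ℓ = 1, 2, …, k−2, and yet there exists a function f : ℝ → ℝ that is Lipschitz with constant 1 with ∫ f dp − ∫ f dq > 1/(2k) (equivalently, the Wasserstein-1 distance satisfies W₁(p,q) > 1/(2k)). -/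
open MeasureTheory Finset

/-- Alternating binomial sums annihilate monomials of low degree. -/
lemma aux_altsum (m : ℕ) : ∀ n : ℕ, m < n →
    ∑ j ∈ range (n + 1), (-1 : ℝ) ^ j * (n.choose j) * (j : ℝ) ^ m = 0 := by
  induction m using Nat.strong_induction_on with
  | _ m ih =>
    intro n hmn
    match m with
    | 0 =>
      simp only [pow_zero, mul_one]
      have h := Int.alternating_sum_range_choose_of_ne (n := n) (by omega)
      have h2 : ((∑ i ∈ range (n + 1), (-1 : ℤ) ^ i * (n.choose i) : ℤ) : ℝ) = 0 := by
        rw [h]; norm_num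
      push_cast at h2
      exact h2
    | m' + 1 =>
      obtain ⟨n', rfl⟩ : ∃ n', n = n' + 1 := ⟨n - 1, by omega⟩
      rw [Finset.sum_range_succ']
      have h0 : (-1 : ℝ) ^ 0 * (((n' + 1).choose 0 : ℕ) : ℝ) * ((0 : ℕ) : ℝ) ^ (m' + 1) = 0 := by
        simp
      rw [h0, add_zero]
      have key : ∀ i ∈ range (n' + 1),
          (-1 : ℝ) ^ (i + 1) * (((n' + 1).choose (i + 1) : ℕ) : ℝ)
              * (((i + 1 : ℕ) : ℝ)) ^ (m' + 1)
            = ∑ r ∈ range (m' + 1),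
                (-((n' : ℝ) + 1) * (m'.choose r)) * ((-1 : ℝ) ^ i * (n'.choose i) * (i : ℝ) ^ r) := by
        intro i _
        have hchoose : (((n' + 1).choose (i + 1) : ℕ) : ℝ) * ((i : ℝ) + 1)
            = ((n' : ℝ) + 1) * (n'.choose i) := by
          have h3 : (n' + 1) * n'.choose i = (n' + 1).choose (i + 1) * (i + 1) :=
            Nat.add_one_mul_choose_eq n' i
          have h4 := congrArg (fun x : ℕ => (x : ℝ)) h3
          push_cast at h4
          linarith
        have hpow : ((i : ℝ) + 1) ^ m'
            = ∑ r ∈ range (m' + 1), (i : ℝ) ^ r * (m'.choose r) := by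
          rw [add_pow]
          exact Finset.sum_congr rfl (by intros; rw [one_pow, mul_one])
        push_cast
        calc (-1 : ℝ) ^ (i + 1) * (((n' + 1).choose (i + 1) : ℕ) : ℝ) * ((i : ℝ) + 1) ^ (m' + 1)
            = (-1 : ℝ) ^ i * (-1) * ((((n' + 1).choose (i + 1) : ℕ) : ℝ) * ((i : ℝ) + 1))
                * ((i : ℝ) + 1) ^ m' := by ring
          _ = (-1 : ℝ) ^ i * (-1) * (((n' : ℝ) + 1) * (n'.choose i))
                * ∑ r ∈ range (m' + 1), (i : ℝ) ^ r * (m'.choose r) := by rw [hchoose, hpow]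
          _ = ∑ r ∈ range (m' + 1),
                (-((n' : ℝ) + 1) * (m'.choose r)) * ((-1 : ℝ) ^ i * (n'.choose i) * (i : ℝ) ^ r) := by
              rw [Finset.mul_sum]
              exact Finset.sum_congr rfl (by intros; ring)
      rw [Finset.sum_congr rfl key, Finset.sum_comm]
      apply Finset.sum_eq_zero
      intro r hr
      have hrm := Finset.mem_range.1 hr
      rw [← Finset.mul_sum, ih r (by omega) n' (by omega), mul_zero]

/-- Alternating binomial sums annihilate affine powers of low degree. -/
lemma aux_altsum_affine (n ℓ : ℕ) (hℓ : ℓ < n) (a b : ℝ) :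
    ∑ j ∈ range (n + 1), (-1 : ℝ) ^ j * (n.choose j) * (a * j + b) ^ ℓ = 0 := by
  have key : ∀ j ∈ range (n + 1), (-1 : ℝ) ^ j * (n.choose j) * (a * j + b) ^ ℓ
      = ∑ r ∈ range (ℓ + 1),
          (a ^ r * b ^ (ℓ - r) * (ℓ.choose r)) * ((-1 : ℝ) ^ j * (n.choose j) * (j : ℝ) ^ r) := by
    intro j _
    rw [add_pow, Finset.mul_sum]
    exact Finset.sum_congr rfl (by intros; rw [mul_pow]; ring)
  rw [Finset.sum_congr rfl key, Finset.sum_comm]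
  apply Finset.sum_eq_zero
  intro r hr
  rw [← Finset.mul_sum, aux_altsum r n (by have := Finset.mem_range.1 hr; omega), mul_zero]

lemma aux_integrable_dirac (f : ℝ → ℝ) (a : ℝ) : Integrable f (Measure.dirac a) := by
  have h : (fun _ : ℝ => f a) =ᵐ[Measure.dirac a] f := by
    rw [MeasureTheory.ae_dirac_eq]
    exact Filter.eventually_pure.2 rfl
  exact (integrable_const (f a)).congr h

lemma aux_integral_sum (s : Finset ℕ) (w : ℕ → ℝ) (hw : ∀ j, 0 ≤ w j) (t : ℕ → ℝ) (f : ℝ → ℝ) :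
    ∫ x, f x ∂(∑ j ∈ s, ENNReal.ofReal (w j) • Measure.dirac (t j))
      = ∑ j ∈ s, w j * f (t j) := by
  rw [integral_finset_sum_measure
    (fun j _ => (aux_integrable_dirac f (t j)).smul_measure ENNReal.ofReal_ne_top)]
  refine Finset.sum_congr rfl fun j _ => ?_
  rw [integral_smul_measure, integral_dirac, ENNReal.toReal_ofReal (hw j), smul_eq_mul]

lemma aux_measure_apply (s : Finset ℕ) (w : ℕ → ℝ) (t : ℕ → ℝ) (A : Set ℝ) :
    (∑ j ∈ s, ENNReal.ofReal (w j) • Measure.dirac (t j)) A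
      = ∑ j ∈ s, ENNReal.ofReal (w j) * Measure.dirac (t j) A := by
  rw [Measure.finset_sum_apply]
  exact Finset.sum_congr rfl fun j _ => rfl

/-- Proposition 1.7. For every even `k ≥ 4` there are probability measures
`p, q` on `ℝ`, each supported on at most `k/2` points of `[-1, 1]`, whose first `k - 2`
moments agree, yet some `1`-Lipschitz function separates them by more than `1/(2k)`
(equivalently `W₁(p, q) > 1/(2k)`). -/
theorem stmt_9 (k : ℕ) (hk : Even k) (hk4 : 4 ≤ k) :
    ∃ p q : Measure ℝ, IsProbabilityMeasure p ∧ IsProbabilityMeasure q ∧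
      (∃ s : Finset ℝ, s.card ≤ k / 2 ∧ (s : Set ℝ) ⊆ Set.Icc (-1) 1 ∧
        p ((s : Set ℝ))ᶜ = 0) ∧
      (∃ s : Finset ℝ, s.card ≤ k / 2 ∧ (s : Set ℝ) ⊆ Set.Icc (-1) 1 ∧
        q ((s : Set ℝ))ᶜ = 0) ∧
      (∀ ℓ : ℕ, 1 ≤ ℓ → ℓ ≤ k - 2 → (∫ x, x ^ ℓ ∂p) = ∫ x, x ^ ℓ ∂q) ∧
      ∃ f : ℝ → ℝ, LipschitzWith 1 f ∧
        1 / (2 * k : ℝ) < (∫ x, f x ∂p) - ∫ x, f x ∂q := by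
  obtain ⟨m, hm⟩ := hk
  set n : ℕ := k - 1 with hn
  have hkn : k = n + 1 := by omega
  have hn3 : 3 ≤ n := by omega
  have hnR : (0 : ℝ) < n := by
    have : (0 : ℕ) < n := by omega
    exact_mod_cast this
  -- nodes and weights
  set t : ℕ → ℝ := fun j => 2 / (n : ℝ) * j + (-1) with ht
  set w : ℕ → ℝ := fun j => (n.choose j : ℝ) / 2 ^ (n - 1) with hwdef
  have hw : ∀ j, 0 ≤ w j := fun j => by positivity
  set E : Finset ℕ := (range (n + 1)).filter (fun j => Even j) with hE
  set O : Finset ℕ := (range (n + 1)).filter (fun j => ¬ Even j) with hO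
  set p : Measure ℝ := ∑ j ∈ E, ENNReal.ofReal (w j) • Measure.dirac (t j) with hp
  set q : Measure ℝ := ∑ j ∈ O, ENNReal.ofReal (w j) • Measure.dirac (t j) with hq
  -- splitting a full alternating sum into even and odd parts
  have hsplit : ∀ g : ℕ → ℝ,
      ∑ j ∈ E, (n.choose j : ℝ) * g j - ∑ j ∈ O, (n.choose j : ℝ) * g j
        = ∑ j ∈ range (n + 1), (-1 : ℝ) ^ j * (n.choose j) * g j := by
    intro g
    rw [← Finset.sum_filter_add_sum_filter_not (range (n + 1)) (fun j => Even j)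
      (fun j => (-1 : ℝ) ^ j * (n.choose j) * g j)]
    have h1 : ∑ j ∈ E, (-1 : ℝ) ^ j * (n.choose j) * g j
        = ∑ j ∈ E, (n.choose j : ℝ) * g j := by
      refine Finset.sum_congr rfl fun j hj => ?_
      rw [(Finset.mem_filter.1 hj).2.neg_one_pow, one_mul]
    have h2 : ∑ j ∈ O, (-1 : ℝ) ^ j * (n.choose j) * g j
        = ∑ j ∈ O, -((n.choose j : ℝ) * g j) := by
      refine Finset.sum_congr rfl fun j hj => ?_
      rw [(Nat.not_even_iff_odd.1 (Finset.mem_filter.1 hj).2).neg_one_pow]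
      ring
    rw [h1, h2, Finset.sum_neg_distrib]
    ring
  -- masses
  have htot : ∑ j ∈ E, (n.choose j : ℝ) + ∑ j ∈ O, (n.choose j : ℝ) = 2 ^ n := by
    rw [Finset.sum_filter_add_sum_filter_not (range (n + 1)) (fun j => Even j)
      (fun j => (n.choose j : ℝ))]
    have := Nat.sum_range_choose n
    have h2 := congrArg (fun x : ℕ => (x : ℝ)) this
    push_cast at h2
    exact h2
  have hzero : ∑ j ∈ E, (n.choose j : ℝ) - ∑ j ∈ O, (n.choose j : ℝ) = 0 := by
    have := hsplit (fun _ => 1)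
    simp only [mul_one] at this
    rw [this]
    have h := Int.alternating_sum_range_choose_of_ne (n := n) (by omega)
    have h2 := congrArg (fun x : ℤ => (x : ℝ)) h
    push_cast at h2
    exact h2
  have hpow2 : (2 : ℝ) ^ n = 2 * 2 ^ (n - 1) := by
    rw [← pow_succ']
    congr 1
    omega
  have hmassE : ∑ j ∈ E, (n.choose j : ℝ) = 2 ^ (n - 1) := by linarith
  have hmassO : ∑ j ∈ O, (n.choose j : ℝ) = 2 ^ (n - 1) := by linarith
  have h2pos : (0 : ℝ) < 2 ^ (n - 1) := by positivity
  have hwE : ∑ j ∈ E, w j = 1 := by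
    rw [hwdef, ← Finset.sum_div, hmassE, div_self (ne_of_gt h2pos)]
  have hwO : ∑ j ∈ O, w j = 1 := by
    rw [hwdef, ← Finset.sum_div, hmassO, div_self (ne_of_gt h2pos)]
  -- probability measures
  have hprob : ∀ (s : Finset ℕ), (∑ j ∈ s, w j) = 1 →
      IsProbabilityMeasure (∑ j ∈ s, ENNReal.ofReal (w j) • Measure.dirac (t j)) := by
    intro s hs
    constructor
    rw [aux_measure_apply]
    have : ∀ j ∈ s, ENNReal.ofReal (w j) * Measure.dirac (t j) Set.univ
        = ENNReal.ofReal (w j) := by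
      intro j _
      rw [Measure.dirac_apply_of_mem (Set.mem_univ _), mul_one]
    rw [Finset.sum_congr rfl this, ← ENNReal.ofReal_sum_of_nonneg (fun j _ => hw j), hs,
      ENNReal.ofReal_one]
  -- supports
  have hsupp : ∀ (s : Finset ℕ),
      (∑ j ∈ s, ENNReal.ofReal (w j) • Measure.dirac (t j)) ((↑(s.image t) : Set ℝ))ᶜ = 0 := by
    intro s
    rw [aux_measure_apply]
    apply Finset.sum_eq_zero
    intro j hj
    have hmem : t j ∈ (↑(s.image t) : Set ℝ) := by
      simp only [Finset.coe_image, Set.mem_image, Finset.mem_coe]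
      exact ⟨j, hj, rfl⟩
    rw [Measure.dirac_apply, Set.indicator_of_notMem (by simpa using hmem), mul_zero]
  have hIccE : ∀ (s : Finset ℕ), s ⊆ range (n + 1) →
      (↑(s.image t) : Set ℝ) ⊆ Set.Icc (-1) 1 := by
    intro s hs x hx
    simp only [Finset.coe_image, Set.mem_image, Finset.mem_coe] at hx
    obtain ⟨j, hj, rfl⟩ := hx
    have hjn : (j : ℝ) ≤ n := by
      have := Finset.mem_range.1 (hs hj)
      exact_mod_cast Nat.lt_succ_iff.1 this
    have hj0 : (0 : ℝ) ≤ j := Nat.cast_nonneg j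
    constructor
    · have : 0 ≤ 2 / (n : ℝ) * j := by positivity
      simp only [ht]
      linarith
    · have : 2 / (n : ℝ) * j ≤ 2 := by
        rw [div_mul_eq_mul_div, div_le_iff₀ hnR]
        linarith
      simp only [ht]
      linarith
  -- cardinalities
  have hcardE : E.card ≤ k / 2 := by
    have hsub : E ⊆ (range (k / 2)).image (fun i => 2 * i) := by
      intro j hj
      rw [hE, Finset.mem_filter, Finset.mem_range] at hj
      obtain ⟨r, hr⟩ := hj.2
      rw [Finset.mem_image]
      exact ⟨r, Finset.mem_range.2 (by omega), by omega⟩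
    calc E.card ≤ _ := Finset.card_le_card hsub
      _ ≤ (range (k / 2)).card := Finset.card_image_le
      _ = k / 2 := Finset.card_range _
  have hcardO : O.card ≤ k / 2 := by
    have hsub : O ⊆ (range (k / 2)).image (fun i => 2 * i + 1) := by
      intro j hj
      rw [hO, Finset.mem_filter, Finset.mem_range] at hj
      have hodd : Odd j := Nat.not_even_iff_odd.1 hj.2
      obtain ⟨r, hr⟩ := hodd
      rw [Finset.mem_image]
      exact ⟨r, Finset.mem_range.2 (by omega), by omega⟩
    calc O.card ≤ _ := Finset.card_le_card hsub
      _ ≤ (range (k / 2)).card := Finset.card_image_le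
      _ = k / 2 := Finset.card_range _
  refine ⟨p, q, hprob E hwE, hprob O hwO,
    ⟨E.image t, le_trans Finset.card_image_le hcardE,
      hIccE E (Finset.filter_subset _ _), hsupp E⟩,
    ⟨O.image t, le_trans Finset.card_image_le hcardO,
      hIccE O (Finset.filter_subset _ _), hsupp O⟩, ?_, ?_⟩
  · -- moments
    intro ℓ hℓ1 hℓ2
    rw [hp, hq, aux_integral_sum E w hw t, aux_integral_sum O w hw t]
    have key : ∑ j ∈ E, (n.choose j : ℝ) * (t j) ^ ℓ
        - ∑ j ∈ O, (n.choose j : ℝ) * (t j) ^ ℓ = 0 := by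
      rw [hsplit (fun j => (t j) ^ ℓ)]
      have := aux_altsum_affine n ℓ (by omega) (2 / (n : ℝ)) (-1)
      simpa [ht] using this
    have hEw : ∑ j ∈ E, w j * (t j) ^ ℓ
        = (∑ j ∈ E, (n.choose j : ℝ) * (t j) ^ ℓ) / 2 ^ (n - 1) := by
      rw [Finset.sum_div]
      exact Finset.sum_congr rfl fun j _ => by rw [hwdef]; ring
    have hOw : ∑ j ∈ O, w j * (t j) ^ ℓ
        = (∑ j ∈ O, (n.choose j : ℝ) * (t j) ^ ℓ) / 2 ^ (n - 1) := by
      rw [Finset.sum_div]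
      exact Finset.sum_congr rfl fun j _ => by rw [hwdef]; ring
    rw [hEw, hOw]
    have : ∑ j ∈ E, (n.choose j : ℝ) * (t j) ^ ℓ
        = ∑ j ∈ O, (n.choose j : ℝ) * (t j) ^ ℓ := by linarith
    rw [this]
  · -- separation
    set S : Set ℝ := (↑(O.image t) : Set ℝ) with hS
    have h1O : 1 ∈ O := by
      rw [hO, Finset.mem_filter, Finset.mem_range]
      exact ⟨by omega, by simp⟩
    have hSne : S.Nonempty := ⟨t 1, by
      simp only [hS, Finset.coe_image, Set.mem_image, Finset.mem_coe]
      exact ⟨1, h1O, rfl⟩⟩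
    refine ⟨fun x => Metric.infDist x S, Metric.lipschitz_infDist_pt S, ?_⟩
    rw [hp, hq, aux_integral_sum E w hw t, aux_integral_sum O w hw t]
    have hq0 : ∑ j ∈ O, w j * Metric.infDist (t j) S = 0 := by
      apply Finset.sum_eq_zero
      intro j hj
      rw [Metric.infDist_zero_of_mem, mul_zero]
      simp only [hS, Finset.coe_image, Set.mem_image, Finset.mem_coe]
      exact ⟨j, hj, rfl⟩
    have hgap : ∀ j ∈ E, 2 / (n : ℝ) ≤ Metric.infDist (t j) S := by
      intro j hj
      haveI := hSne.to_subtype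
      rw [Metric.infDist_eq_iInf]
      apply le_ciInf
      rintro ⟨y, hy⟩
      simp only [hS, Finset.coe_image, Set.mem_image, Finset.mem_coe] at hy
      obtain ⟨i, hi, rfl⟩ := hy
      have hji : j ≠ i := by
        intro hcon
        exact (Finset.mem_filter.1 hi).2 (hcon ▸ (Finset.mem_filter.1 hj).2)
      have habs : (1 : ℝ) ≤ |(j : ℝ) - (i : ℝ)| := by
        have hne : ((j : ℤ) - i) ≠ 0 := sub_ne_zero.2 (by exact_mod_cast hji)
        have h1 := Int.one_le_abs hne
        calc (1 : ℝ) ≤ ((|(j : ℤ) - i| : ℤ) : ℝ) := by exact_mod_cast h1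
          _ = |(j : ℝ) - (i : ℝ)| := by push_cast; ring_nf
      have : dist (t j) (t i) = 2 / (n : ℝ) * |(j : ℝ) - (i : ℝ)| := by
        rw [Real.dist_eq]
        have : t j - t i = 2 / (n : ℝ) * ((j : ℝ) - (i : ℝ)) := by
          simp only [ht]; ring
        rw [this, abs_mul, abs_of_pos (by positivity : (0:ℝ) < 2 / (n : ℝ))]
      rw [this]
      have h2n : (0 : ℝ) < 2 / (n : ℝ) := by positivity
      nlinarith [mul_le_mul_of_nonneg_left habs (le_of_lt h2n)]
    have hlow : 2 / (n : ℝ) ≤ ∑ j ∈ E, w j * Metric.infDist (t j) S := by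
      calc 2 / (n : ℝ) = ∑ j ∈ E, w j * (2 / (n : ℝ)) := by
            rw [← Finset.sum_mul, hwE, one_mul]
        _ ≤ ∑ j ∈ E, w j * Metric.infDist (t j) S :=
            Finset.sum_le_sum fun j hj => mul_le_mul_of_nonneg_left (hgap j hj) (hw j)
    have hfinal : 1 / (2 * (k : ℝ)) < 2 / (n : ℝ) := by
      have hkR : (0 : ℝ) < k := by
        have : (0 : ℕ) < k := by omega
        exact_mod_cast this
      rw [div_lt_div_iff₀ (by linarith) hnR]
      have : (n : ℝ) = (k : ℝ) - 1 := by
        rw [hn]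
        have : (1 : ℕ) ≤ k := by omega
        push_cast [Nat.cast_sub this]
        ring
      nlinarith
    rw [hq0, sub_zero]
    linarith
end

section
/- Let a = (a_1,…,a_d) and b = (b_1,…,b_d) be nondecreasing vectors of real numbers (a_i ≤ a_{i+1} and b_i ≤ b_{i+1} for all i). Then: (i) for every function f : ℝ → ℝ that is Lipschitz with constant 1, |Σ_{i=1}^d f(a_i) − Σ_{i=1}^d f(b_i)| ≤ Σ_{i=1}^d |a_i − b_i|; and (ii) there exists a function f : ℝ → ℝ that is Lipschitz with constant 1 achieving equality, i.e., Σ_{i=1}^d f(a_i) − Σ_{i=1}^d f(b_i) = Σ_{i=1}^d |a_i − b_i|. (Equivalently, the L₁ distance between the sorted vectors equals d times the Wasserstein-1 distance between the two uniform point-mass distributions p_a and p_b placing mass 1/d at each a_i and each b_i respectively.) -/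
open MeasureTheory intervalIntegral Finset

/-- Fact 3.2. For nondecreasing vectors `a, b ∈ ℝ^d`: (i) every
`1`-Lipschitz `f` satisfies `|∑ f(a i) − ∑ f(b i)| ≤ ∑ |a i − b i|`, and (ii) some
`1`-Lipschitz `f` attains equality; i.e. the `L₁` distance between the sorted vectors equals
`d` times the Wasserstein-1 distance between the associated uniform point-mass measures. -/
theorem stmt_10 {d : ℕ} (a b : Fin d → ℝ) (ha : Monotone a) (hb : Monotone b) :
    (∀ f : ℝ → ℝ, LipschitzWith 1 f →
      |(∑ i, f (a i)) - ∑ i, f (b i)| ≤ ∑ i, |a i - b i|) ∧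
    ∃ f : ℝ → ℝ, LipschitzWith 1 f ∧
      (∑ i, f (a i)) - (∑ i, f (b i)) = ∑ i, |a i - b i| := by
  constructor
  · intro f hf
    calc |(∑ i, f (a i)) - ∑ i, f (b i)| = |∑ i, (f (a i) - f (b i))| := by
          rw [Finset.sum_sub_distrib]
      _ ≤ ∑ i, |f (a i) - f (b i)| := Finset.abs_sum_le_sum_abs _ _
      _ ≤ ∑ i, |a i - b i| := Finset.sum_le_sum fun i _ => by
          have := hf.dist_le_mul (a i) (b i)
          simpa [Real.dist_eq] using this
  · -- counting functions
    set N : (Fin d → ℝ) → ℝ → ℕ := fun c t => (Finset.univ.filter fun j => c j ≤ t).card with hN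
    have hNmeas : ∀ c : Fin d → ℝ, Measurable fun t => N c t := by
      intro c
      have : (fun t => N c t) = fun t => ∑ j : Fin d, if c j ≤ t then 1 else 0 := by
        funext t; rw [hN]; exact Finset.card_filter _ _
      rw [this]
      exact Finset.measurable_sum _ fun j _ =>
        Measurable.ite (measurableSet_Ici (a := c j)) measurable_const measurable_const
    set g : ℝ → ℝ := fun t => if N a t < N b t then 1 else -1 with hg
    have hgmeas : Measurable g :=
      Measurable.ite (measurableSet_lt (hNmeas a) (hNmeas b)) measurable_const measurable_const
    have hgnorm : ∀ t, ‖g t‖ ≤ 1 := by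
      intro t; simp only [hg]; split <;> simp
    have hgint : ∀ x y : ℝ, IntervalIntegrable g volume x y := by
      intro x y
      exact (_root_.intervalIntegrable_const (c := (1:ℝ))).mono_fun hgmeas.aestronglyMeasurable
        (ae_of_all _ fun t => by simpa using hgnorm t)
    set f : ℝ → ℝ := fun x => ∫ t in (0:ℝ)..x, g t with hf
    have hdiff : ∀ x y : ℝ, f x - f y = ∫ t in y..x, g t := by
      intro x y
      exact integral_interval_sub_left (hgint 0 x) (hgint 0 y)
    have hlip : LipschitzWith 1 f := by
      apply LipschitzWith.of_dist_le_mul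
      intro x y
      rw [Real.dist_eq, Real.dist_eq, hdiff x y]
      have := intervalIntegral.norm_integral_le_of_norm_le_const
        (C := 1) (f := g) (a := y) (b := x) (fun t _ => hgnorm t)
      simpa [abs_sub_comm x y] using this
    refine ⟨f, hlip, ?_⟩
    have hcard : ∀ i : Fin d, (Finset.Iio i).card < (Finset.Iic i).card := by
      intro i
      apply Finset.card_lt_card
      constructor
      · exact Finset.Iio_subset_Iic_self
      · intro h
        have := h (Finset.mem_Iic.2 (le_refl i))
        exact absurd (Finset.mem_Iio.1 this) (lt_irrefl i)
    have key : ∀ i : Fin d, f (a i) - f (b i) = |a i - b i| := by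
      intro i
      rcases le_total (b i) (a i) with h | h
      · -- g = 1 on [b i, a i)
        have hone : ∀ t, b i ≤ t → t < a i → g t = 1 := by
          intro t h1 h2
          have hNa : N a t ≤ (Finset.Iio i).card := by
            apply Finset.card_le_card
            intro j hj
            rw [Finset.mem_filter] at hj
            rw [Finset.mem_Iio]
            by_contra hji
            push_neg at hji
            exact absurd (lt_of_le_of_lt hj.2 h2) (not_lt.2 (ha hji))
          have hNb : (Finset.Iic i).card ≤ N b t := by
            apply Finset.card_le_card
            intro j hj
            rw [Finset.mem_Iic] at hj
            exact Finset.mem_filter.2 ⟨Finset.mem_univ _, le_trans (hb hj) h1⟩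
          have : N a t < N b t := lt_of_le_of_lt hNa (lt_of_lt_of_le (hcard i) hNb)
          simp [hg, this]
        have hae : ∀ᵐ t : ℝ, t ∈ Set.uIoc (b i) (a i) → g t = 1 := by
          have hne : ∀ᵐ t : ℝ, t ≠ a i := by
            rw [MeasureTheory.ae_iff]
            simp only [ne_eq, not_not]
            convert Real.volume_singleton (a := a i) using 2
            ext; simp
          filter_upwards [hne] with t ht htmem
          rw [Set.uIoc_of_le h] at htmem
          exact hone t (le_of_lt htmem.1) (lt_of_le_of_ne htmem.2 ht)
        rw [hdiff, intervalIntegral.integral_congr_ae hae]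
        rw [intervalIntegral.integral_const]
        rw [abs_of_nonneg (sub_nonneg.2 h), smul_eq_mul, mul_one]
      · -- a i ≤ b i : g = -1 on [a i, b i)
        have hmone : ∀ t, a i ≤ t → t < b i → g t = -1 := by
          intro t h1 h2
          have hNb : N b t ≤ (Finset.Iio i).card := by
            apply Finset.card_le_card
            intro j hj
            rw [Finset.mem_filter] at hj
            rw [Finset.mem_Iio]
            by_contra hji
            push_neg at hji
            exact absurd (lt_of_le_of_lt hj.2 h2) (not_lt.2 (hb hji))
          have hNa : (Finset.Iic i).card ≤ N a t := by
            apply Finset.card_le_card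
            intro j hj
            rw [Finset.mem_Iic] at hj
            exact Finset.mem_filter.2 ⟨Finset.mem_univ _, le_trans (ha hj) h1⟩
          have : ¬ (N a t < N b t) := by
            apply not_lt.2
            exact le_trans (le_trans hNb (le_of_lt (hcard i))) hNa
          simp [hg, this]
        have hae : ∀ᵐ t : ℝ, t ∈ Set.uIoc (b i) (a i) → g t = -1 := by
          have hne : ∀ᵐ t : ℝ, t ≠ b i := by
            rw [MeasureTheory.ae_iff]
            simp only [ne_eq, not_not]
            convert Real.volume_singleton (a := b i) using 2
            ext; simp
          filter_upwards [hne] with t ht htmem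
          rw [Set.uIoc_of_ge h] at htmem
          exact hmone t (le_of_lt htmem.1) (lt_of_le_of_ne htmem.2 ht)
        rw [hdiff, intervalIntegral.integral_congr_ae hae]
        rw [intervalIntegral.integral_const]
        rw [abs_of_nonpos (sub_nonpos.2 h), smul_eq_mul]
        ring
    calc (∑ i, f (a i)) - (∑ i, f (b i)) = ∑ i, (f (a i) - f (b i)) := by
          rw [Finset.sum_sub_distrib]
      _ = ∑ i, |a i - b i| := Finset.sum_congr rfl fun i _ => key i
end

section
/- Let p be a Borel probability measure on ℝ supported in a compact interval [a, b], let d ≥ 1 be an integer, and for i = 1,…,d let λ_i be the i-th (d+1)-quantile of p, that is, λ_i = min{ x : p((−∞, x]) ≥ i/(d+1) }. Then for every function f : ℝ → ℝ that is Lipschitz with constant 1, |∫ f dp − (1/d) Σ_{i=1}^d f(λ_i)| ≤ (b − a)/d; that is, the Wasserstein-1 distance between p and the measure placing mass 1/d at each λ_i is at most (b−a)/d. -/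
open MeasureTheory Set ProbabilityTheory Filter Topology
namespace Stmt11Aux

noncomputable def Q (p : Measure ℝ) (t : ℝ) : ℝ := sInf {x | t ≤ cdf p x}

variable {p : Measure ℝ} [IsProbabilityMeasure p] {a b : ℝ}

lemma cdf_b (hsupp : p (Set.Icc a b)ᶜ = 0) : cdf p b = 1 := by
  have h1 : p (Set.Iic b) = 1 := by
    rw [← prob_compl_eq_zero_iff measurableSet_Iic]
    refine measure_mono_null ?_ hsupp
    intro x hx
    simp only [compl_Iic, mem_Ioi] at hx
    simp only [mem_compl_iff, mem_Icc, not_and_or, not_le]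
    right; exact hx
  rw [cdf_eq_real, measureReal_def, h1]; simp

lemma cdf_lt_a (hsupp : p (Set.Icc a b)ᶜ = 0) {x : ℝ} (hx : x < a) : cdf p x = 0 := by
  have h1 : p (Set.Iic x) = 0 := by
    refine measure_mono_null ?_ hsupp
    intro y hy
    simp only [mem_Iic] at hy
    simp only [mem_compl_iff, mem_Icc, not_and_or, not_le]
    left; exact lt_of_le_of_lt hy hx
  rw [cdf_eq_real, measureReal_def, h1]; simp

lemma S_nonempty (hsupp : p (Set.Icc a b)ᶜ = 0) {t : ℝ} (ht1 : t ≤ 1) :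
    {x | t ≤ cdf p x}.Nonempty := ⟨b, by rw [mem_setOf_eq, cdf_b hsupp]; exact ht1⟩

lemma S_bdd (hsupp : p (Set.Icc a b)ᶜ = 0) {t : ℝ} (ht0 : 0 < t) :
    a ∈ lowerBounds {x | t ≤ cdf p x} := by
  intro x hx
  by_contra h
  push_neg at h
  rw [mem_setOf_eq, cdf_lt_a hsupp h] at hx
  linarith

lemma Q_mem (hsupp : p (Set.Icc a b)ᶜ = 0) {t : ℝ} (ht0 : 0 < t) (ht1 : t ≤ 1) :
    t ≤ cdf p (Q p t) := by
  have hne := S_nonempty hsupp ht1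
  have hbdd : BddBelow {x | t ≤ cdf p x} := ⟨a, S_bdd hsupp ht0⟩
  have key : ∀ y ∈ Ioi (Q p t), t ≤ cdf p y := by
    intro y hy
    obtain ⟨x, hxS, hxy⟩ := (csInf_lt_iff hbdd hne).mp hy
    exact le_trans hxS ((cdf p).mono hxy.le)
  have htend : Tendsto (cdf p) (𝓝[>] (Q p t)) (𝓝 (cdf p (Q p t))) :=
    ((cdf p).right_continuous (Q p t)).mono_of_mem_nhdsWithin
      (nhdsWithin_mono _ Ioi_subset_Ici_self (self_mem_nhdsWithin)) |>.tendsto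
  exact ge_of_tendsto htend (eventually_nhdsWithin_of_forall key)

lemma Q_le_iff (hsupp : p (Set.Icc a b)ᶜ = 0) {t : ℝ} (ht0 : 0 < t) (ht1 : t ≤ 1) {x : ℝ} :
    Q p t ≤ x ↔ t ≤ cdf p x := by
  constructor
  · intro h
    exact le_trans (Q_mem hsupp ht0 ht1) ((cdf p).mono h)
  · intro h
    exact csInf_le ⟨a, S_bdd hsupp ht0⟩ h

lemma a_le_Q (hsupp : p (Set.Icc a b)ᶜ = 0) {t : ℝ} (ht0 : 0 < t) (ht1 : t ≤ 1) :
    a ≤ Q p t :=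
  le_csInf (S_nonempty hsupp ht1) (S_bdd hsupp ht0)

lemma Q_le_b (hsupp : p (Set.Icc a b)ᶜ = 0) {t : ℝ} (ht0 : 0 < t) (ht1 : t ≤ 1) :
    Q p t ≤ b :=
  (Q_le_iff hsupp ht0 ht1).mpr (by rw [cdf_b hsupp]; exact ht1)

lemma Q_mono (hsupp : p (Set.Icc a b)ᶜ = 0) {t t' : ℝ} (ht0 : 0 < t) (htt' : t ≤ t')
    (ht1 : t' ≤ 1) : Q p t ≤ Q p t' :=
  (Q_le_iff hsupp ht0 (htt'.trans ht1)).mpr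
    (le_trans htt' (Q_mem hsupp (ht0.trans_le htt') ht1))

lemma Q_monotoneOn (hsupp : p (Set.Icc a b)ᶜ = 0) : MonotoneOn (Q p) (Ioc (0:ℝ) 1) :=
  fun _ ht _ ht' h => Q_mono hsupp ht.1 h ht'.2

lemma Q_aemeasurable (hsupp : p (Set.Icc a b)ᶜ = 0) :
    AEMeasurable (Q p) (volume.restrict (Ioc (0:ℝ) 1)) :=
  aemeasurable_restrict_of_monotoneOn measurableSet_Ioc (Q_monotoneOn hsupp)

lemma map_Q (hsupp : p (Set.Icc a b)ᶜ = 0) :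
    Measure.map (Q p) (volume.restrict (Ioc (0:ℝ) 1)) = p := by
  have hQae := Q_aemeasurable (p := p) hsupp
  have hprob : IsProbabilityMeasure (volume.restrict (Ioc (0:ℝ) 1)) := by
    constructor
    simp [Real.volume_Ioc]
  have : IsProbabilityMeasure (Measure.map (Q p) (volume.restrict (Ioc (0:ℝ) 1))) :=
    Measure.isProbabilityMeasure_map hQae
  refine Measure.ext_of_Iic _ _ fun x => ?_
  rw [Measure.map_apply_of_aemeasurable hQae measurableSet_Iic,
    Measure.restrict_apply' measurableSet_Ioc]
  have hset : Q p ⁻¹' Iic x ∩ Ioc (0:ℝ) 1 = Ioc 0 (cdf p x) := by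
    ext t
    simp only [mem_inter_iff, mem_preimage, mem_Iic, mem_Ioc]
    constructor
    · rintro ⟨hQ, ht0, ht1⟩
      exact ⟨ht0, (Q_le_iff hsupp ht0 ht1).mp hQ⟩
    · rintro ⟨ht0, htF⟩
      have ht1 : t ≤ 1 := htF.trans (cdf_le_one p x)
      exact ⟨(Q_le_iff hsupp ht0 ht1).mpr htF, ht0, ht1⟩
  rw [hset, Real.volume_Ioc, sub_zero, ofReal_cdf]

end Stmt11Aux

open Stmt11Aux

/-- Fact 3.3. Let `p` be a Borel probability measure supported in `[a, b]`
and, for `i = 1, …, d`, let `λ_i` be the `i`-th `(d+1)`-quantile of `p`, i.e. the minimum `x`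
with `p((-∞, x]) ≥ i/(d+1)`. Then for every `1`-Lipschitz `f`,
`|∫ f dp − (1/d) ∑ i f(λ_i)| ≤ (b − a)/d`; i.e. the Wasserstein-1 distance between `p` and
the uniform measure on the quantiles is at most `(b − a)/d`. -/
theorem stmt_11 (p : Measure ℝ) [IsProbabilityMeasure p] (a b : ℝ) (hab : a ≤ b)
    (hsupp : p (Set.Icc a b)ᶜ = 0) (d : ℕ) (hd : 1 ≤ d)
    (lam : Fin d → ℝ)
    (hlam : ∀ i : Fin d,
      IsLeast {x : ℝ | ((i : ℕ) + 1 : ℝ) / (d + 1) ≤ (p (Set.Iic x)).toReal} (lam i)) :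
    ∀ f : ℝ → ℝ, LipschitzWith 1 f →
      |(∫ x, f x ∂p) - (1 / d : ℝ) * ∑ i, f (lam i)| ≤ (b - a) / d := by
  intro f hf
  classical
  have hd0 : (0:ℝ) < d := by exact_mod_cast hd
  have hd1 : (0:ℝ) < (d:ℝ) + 1 := by linarith
  have hlamQ : ∀ i : Fin d, lam i = Q p (((i:ℕ)+1:ℝ)/(d+1)) := by
    intro i
    have h := hlam i
    have hs : {x : ℝ | ((i:ℕ)+1:ℝ)/(d+1) ≤ (p (Set.Iic x)).toReal}
        = {x | ((i:ℕ)+1:ℝ)/(d+1) ≤ cdf p x} := by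
      ext x; rw [mem_setOf_eq, mem_setOf_eq, cdf_eq_real, measureReal_def]
    rw [hs] at h
    exact (h.csInf_eq).symm
  set Λ : ℕ → ℝ := fun j => if j = 0 then a else if j ≤ d then Q p ((j:ℝ)/((d:ℝ)+1)) else b
    with hΛdef
  have hΛ0 : Λ 0 = a := by simp [hΛdef]
  have hΛd1 : Λ (d+1) = b := by simp [hΛdef]
  have hΛmid : ∀ j : ℕ, 1 ≤ j → j ≤ d → Λ j = Q p ((j:ℝ)/((d:ℝ)+1)) := by
    intro j h1 h2
    simp only [hΛdef]
    rw [if_neg (by omega), if_pos h2]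
  have hlev : ∀ j : ℕ, 1 ≤ j → j ≤ d + 1 → 0 < (j:ℝ)/((d:ℝ)+1) ∧ (j:ℝ)/((d:ℝ)+1) ≤ 1 := by
    intro j h1 h2
    constructor
    · apply div_pos (by exact_mod_cast h1) hd1
    · rw [div_le_one hd1]
      push_cast
      exact_mod_cast (by exact_mod_cast h2 : (j:ℝ) ≤ (d:ℝ)+1)
  have hlamΛ : ∀ i : Fin d, lam i = Λ ((i:ℕ) + 1) := by
    intro i
    rw [hΛmid _ (by omega) (by omega), hlamQ i]
    push_cast
    ring_nf
  -- lower bound for Q t on interval i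
  have hlow : ∀ i : ℕ, i < d → ∀ t : ℝ, (i:ℝ)/d < t → t ≤ 1 → Λ i ≤ Q p t := by
    intro i hi t ht0 ht1
    rcases Nat.eq_zero_or_pos i with h0 | h1
    · subst h0
      rw [hΛ0]
      exact a_le_Q hsupp (by simpa using ht0) ht1
    · rw [hΛmid _ h1 (by omega)]
      refine Q_mono hsupp ((hlev i h1 (by omega)).1) ?_ ht1
      calc (i:ℝ)/((d:ℝ)+1) ≤ (i:ℝ)/d := by
            apply div_le_div_of_nonneg_left (by positivity) hd0 (by linarith)
        _ ≤ t := ht0.le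
  have hhigh : ∀ i : ℕ, i < d → ∀ t : ℝ, 0 < t → t ≤ ((i:ℝ)+1)/d → Q p t ≤ Λ (i+2) := by
    intro i hi t ht0 ht1
    by_cases hcase : i + 1 = d
    · have : Λ (i+2) = b := by rw [(by omega : i + 2 = d + 1), hΛd1]
      rw [this]
      refine Q_le_b hsupp ht0 ?_
      refine ht1.trans ?_
      rw [div_le_one hd0]
      have : ((i:ℝ)+1) = (d:ℝ) := by exact_mod_cast congrArg (Nat.cast (R := ℝ)) hcase
      linarith
    · rw [hΛmid (i+2) (by omega) (by omega)]
      refine Q_mono hsupp ht0 ?_ (hlev (i+2) (by omega) (by omega)).2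
      refine ht1.trans ?_
      rw [div_le_div_iff₀ hd0 hd1]
      push_cast
      nlinarith [(by exact_mod_cast Nat.lt_of_le_of_ne (by omega) hcase : (i:ℝ)+1 < (d:ℝ))]
  have hmidle : ∀ i : ℕ, i < d → ∀ t : ℝ, 0 < t → t ≤ ((i:ℝ)+1)/((d:ℝ)+1) → Q p t ≤ Λ (i+1) := by
    intro i hi t ht0 ht1
    rw [hΛmid (i+1) (by omega) (by omega)]
    refine Q_mono hsupp ht0 ?_ (hlev (i+1) (by omega) (by omega)).2
    refine ht1.trans_eq ?_
    push_cast; ring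
  have hmidge : ∀ i : ℕ, i < d → ∀ t : ℝ, ((i:ℝ)+1)/((d:ℝ)+1) < t → t ≤ 1 → Λ (i+1) ≤ Q p t := by
    intro i hi t ht0 ht1
    rw [hΛmid (i+1) (by omega) (by omega)]
    refine Q_mono hsupp (hlev (i+1) (by omega) (by omega)).1 ?_ ht1
    refine le_of_le_of_eq ?_ (rfl : t = t)
    refine le_trans (le_of_eq ?_) ht0.le
    push_cast; ring
  -- gaps are nonneg
  have hgap : ∀ j : ℕ, j ≤ d → Λ j ≤ Λ (j+1) := by
    intro j hj
    rcases Nat.eq_zero_or_pos j with h0 | h1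
    · subst h0
      rw [hΛ0, hΛmid 1 le_rfl hd]
      exact a_le_Q hsupp (hlev 1 le_rfl (by omega)).1 (hlev 1 le_rfl (by omega)).2
    · by_cases hcase : j = d
      · subst hcase
        rw [hΛd1, hΛmid j h1 le_rfl]
        exact Q_le_b hsupp (hlev j h1 (by omega)).1 (hlev j h1 (by omega)).2
      · rw [hΛmid j h1 hj, hΛmid (j+1) (by omega) (by omega)]
        refine Q_mono hsupp (hlev j h1 (by omega)).1 ?_ (hlev (j+1) (by omega) (by omega)).2
        push_cast
        gcongr
        linarith
  -- integrability of f ∘ Q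
  have hQae := Q_aemeasurable (p := p) (a := a) (b := b) hsupp
  have hfQm : AEStronglyMeasurable (fun t => f (Q p t)) (volume.restrict (Ioc (0:ℝ) 1)) :=
    (hf.continuous.measurable.comp_aemeasurable hQae).aestronglyMeasurable
  have hlip : ∀ x y : ℝ, |f x - f y| ≤ |x - y| := by
    intro x y
    have := hf.dist_le_mul x y
    rw [Real.dist_eq, Real.dist_eq] at this
    simpa using this
  have hbound : ∀ t ∈ Ioc (0:ℝ) 1, ‖f (Q p t)‖ ≤ |f a| + (b - a) := by
    intro t ht
    have h1 : a ≤ Q p t := a_le_Q hsupp ht.1 ht.2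
    have h2 : Q p t ≤ b := Q_le_b hsupp ht.1 ht.2
    have h3 := hlip (Q p t) a
    rw [Real.norm_eq_abs]
    have h4 : |Q p t - a| = Q p t - a := abs_of_nonneg (by linarith)
    calc |f (Q p t)| = |f a + (f (Q p t) - f a)| := by ring_nf
      _ ≤ |f a| + |f (Q p t) - f a| := abs_add_le _ _
      _ ≤ |f a| + (b - a) := by rw [h4] at h3; linarith
  have hintg : IntegrableOn (fun t => f (Q p t)) (Ioc (0:ℝ) 1) volume := by
    refine Integrable.mono' (integrable_const (|f a| + (b - a))) hfQm ?_
    rw [ae_restrict_iff' measurableSet_Ioc]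
    filter_upwards with t ht
    exact hbound t ht
  -- probability integral transform
  have hint : ∫ x, f x ∂p = ∫ t in Ioc (0:ℝ) 1, f (Q p t) := by
    conv_lhs => rw [← map_Q hsupp]
    exact integral_map hQae hf.continuous.aestronglyMeasurable
  -- partition of (0,1] into d pieces
  set ak : ℕ → ℝ := fun k => (k:ℝ)/d with hak
  have hakmono : ∀ k : ℕ, ak k ≤ ak (k+1) := by
    intro k
    simp only [hak]
    gcongr <;> push_cast <;> linarith
  have hak0 : ∀ k : ℕ, 0 ≤ ak k := fun k => by positivity
  have hak1 : ∀ k : ℕ, k ≤ d → ak k ≤ 1 := by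
    intro k hk
    simp only [hak]
    rw [div_le_one hd0]
    exact_mod_cast hk
  have hIoc_sub : ∀ i : ℕ, i < d → Ioc (ak i) (ak (i+1)) ⊆ Ioc (0:ℝ) 1 :=
    fun i hi => Ioc_subset_Ioc (hak0 i) (hak1 (i+1) (by omega))
  have hadj : ∀ k : ℕ, k < d →
      IntervalIntegrable (fun t => f (Q p t)) volume (ak k) (ak (k+1)) := by
    intro k hk
    rw [intervalIntegrable_iff_integrableOn_Ioc_of_le (hakmono k)]
    exact hintg.mono_set (hIoc_sub k hk)
  have hsplit : ∫ t in Ioc (0:ℝ) 1, f (Q p t)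
      = ∑ i ∈ Finset.range d, ∫ t in Ioc (ak i) (ak (i+1)), f (Q p t) := by
    have h := intervalIntegral.sum_integral_adjacent_intervals (a := ak) (n := d) hadj
    have h0 : ak 0 = 0 := by simp [hak]
    have hdd : ak d = 1 := by
      simp only [hak]
      field_simp
    rw [h0, hdd, intervalIntegral.integral_of_le (by norm_num : (0:ℝ) ≤ 1)] at h
    rw [← h]
    exact Finset.sum_congr rfl fun i hi => (intervalIntegral.integral_of_le (hakmono i))
  have hfin : ∑ i : Fin d, f (lam i) = ∑ i ∈ Finset.range d, f (Λ (i+1)) := by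
    rw [← Fin.sum_univ_eq_sum_range (fun j => f (Λ (j+1))) d]
    exact Finset.sum_congr rfl fun i _ => by rw [hlamΛ i]
  have hlen : ∀ i : ℕ, (volume (Ioc (ak i) (ak (i+1)))).toReal = 1/d := by
    intro i
    have h5 : ak (i+1) - ak i = 1/d := by
      simp only [hak]
      push_cast
      field_simp
      ring
    rw [Real.volume_Ioc, h5, ENNReal.toReal_ofReal (by positivity)]
  -- key per-interval estimate
  have key : ∀ i : ℕ, i < d →
      |(∫ t in Ioc (ak i) (ak (i+1)), f (Q p t)) - (1/d : ℝ) * f (Λ (i+1))|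
        ≤ (((d:ℝ)-(i:ℝ))/((d:ℝ)*((d:ℝ)+1))) * (Λ (i+1) - Λ i)
          + (((i:ℝ)+1)/((d:ℝ)*((d:ℝ)+1))) * (Λ (i+2) - Λ (i+1)) := by
    intro i hi
    set m : ℝ := ((i:ℝ)+1)/((d:ℝ)+1) with hm
    have hum : ak i ≤ m := by
      simp only [hak, hm]
      rw [div_le_div_iff₀ hd0 hd1]
      have : (i:ℝ) + 1 ≤ (d:ℝ) := by exact_mod_cast hi
      nlinarith
    have hmv : m ≤ ak (i+1) := by
      simp only [hak, hm]
      rw [div_le_div_iff₀ hd1 hd0]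
      push_cast
      have : (i:ℝ) + 1 ≤ (d:ℝ) := by exact_mod_cast hi
      nlinarith
    have hm1 : m ≤ 1 := le_trans hmv (hak1 (i+1) (by omega))
    have hgapL : (0:ℝ) ≤ Λ (i+1) - Λ i := by linarith [hgap i (by omega)]
    have hgapR : (0:ℝ) ≤ Λ (i+2) - Λ (i+1) := by linarith [hgap (i+1) (by omega)]
    have h1d : (1/d : ℝ) * f (Λ (i+1)) = ∫ t in Ioc (ak i) (ak (i+1)), f (Λ (i+1)) := by
      rw [setIntegral_const, measureReal_def, hlen i, smul_eq_mul]
    have hconst : IntegrableOn (fun _ : ℝ => f (Λ (i+1))) (Ioc (ak i) (ak (i+1))) volume :=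
      integrableOn_const measure_Ioc_lt_top.ne
    have heq : (∫ t in Ioc (ak i) (ak (i+1)), f (Q p t)) - (1/d : ℝ) * f (Λ (i+1))
        = ∫ t in Ioc (ak i) (ak (i+1)), (f (Q p t) - f (Λ (i+1))) := by
      rw [h1d, ← integral_sub (hintg.mono_set (hIoc_sub i hi)) hconst]
    have hsubL : Ioc (ak i) m ⊆ Ioc (0:ℝ) 1 := Ioc_subset_Ioc (hak0 i) hm1
    have hsubR : Ioc m (ak (i+1)) ⊆ Ioc (0:ℝ) 1 :=
      Ioc_subset_Ioc (le_trans (hak0 i) hum) (hak1 (i+1) (by omega))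
    have hintgL : IntegrableOn (fun t => f (Q p t) - f (Λ (i+1))) (Ioc (ak i) m) volume :=
      (hintg.mono_set hsubL).sub (integrableOn_const measure_Ioc_lt_top.ne)
    have hintgR : IntegrableOn (fun t => f (Q p t) - f (Λ (i+1))) (Ioc m (ak (i+1))) volume :=
      (hintg.mono_set hsubR).sub (integrableOn_const measure_Ioc_lt_top.ne)
    have hsplit2 : ∫ t in Ioc (ak i) (ak (i+1)), (f (Q p t) - f (Λ (i+1)))
        = (∫ t in Ioc (ak i) m, (f (Q p t) - f (Λ (i+1))))
          + ∫ t in Ioc m (ak (i+1)), (f (Q p t) - f (Λ (i+1))) := by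
      rw [← Ioc_union_Ioc_eq_Ioc hum hmv,
        setIntegral_union (Ioc_disjoint_Ioc_of_le le_rfl) measurableSet_Ioc hintgL hintgR]
    have hL : ‖∫ t in Ioc (ak i) m, (f (Q p t) - f (Λ (i+1)))‖
        ≤ (Λ (i+1) - Λ i) * (volume (Ioc (ak i) m)).toReal := by
      refine norm_setIntegral_le_of_norm_le_const_ae' measure_Ioc_lt_top ?_
      filter_upwards with t ht
      have ht0 : (0:ℝ) < t := lt_of_le_of_lt (hak0 i) ht.1
      have ht1 : t ≤ 1 := ht.2.trans hm1
      have hlo : Λ i ≤ Q p t := hlow i hi t ht.1 ht1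
      have hhi : Q p t ≤ Λ (i+1) := hmidle i hi t ht0 ht.2
      have h6 := hlip (Q p t) (Λ (i+1))
      rw [Real.norm_eq_abs]
      refine h6.trans ?_
      rw [abs_of_nonpos (by linarith)]
      linarith
    have hR : ‖∫ t in Ioc m (ak (i+1)), (f (Q p t) - f (Λ (i+1)))‖
        ≤ (Λ (i+2) - Λ (i+1)) * (volume (Ioc m (ak (i+1)))).toReal := by
      refine norm_setIntegral_le_of_norm_le_const_ae' measure_Ioc_lt_top ?_
      filter_upwards with t ht
      have ht0 : (0:ℝ) < t := lt_of_le_of_lt (le_trans (hak0 i) hum) ht.1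
      have hlo : Λ (i+1) ≤ Q p t := hmidge i hi t ht.1 (ht.2.trans (hak1 (i+1) (by omega)))
      have hhi : Q p t ≤ Λ (i+2) := hhigh i hi t ht0 (by
        refine ht.2.trans (le_of_eq ?_)
        simp only [hak]; push_cast; ring)
      have h6 := hlip (Q p t) (Λ (i+1))
      rw [Real.norm_eq_abs]
      refine h6.trans ?_
      rw [abs_of_nonneg (by linarith)]
      linarith
    have hvolL : (volume (Ioc (ak i) m)).toReal = ((d:ℝ)-(i:ℝ))/((d:ℝ)*((d:ℝ)+1)) := by
      rw [Real.volume_Ioc, ENNReal.toReal_ofReal (by linarith)]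
      simp only [hak, hm]
      field_simp
      ring
    have hvolR : (volume (Ioc m (ak (i+1)))).toReal = ((i:ℝ)+1)/((d:ℝ)*((d:ℝ)+1)) := by
      rw [Real.volume_Ioc, ENNReal.toReal_ofReal (by linarith)]
      simp only [hak, hm]
      push_cast
      field_simp
      ring
    rw [heq, hsplit2]
    calc |(∫ t in Ioc (ak i) m, (f (Q p t) - f (Λ (i+1))))
          + ∫ t in Ioc m (ak (i+1)), (f (Q p t) - f (Λ (i+1)))|
        ≤ ‖∫ t in Ioc (ak i) m, (f (Q p t) - f (Λ (i+1)))‖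
          + ‖∫ t in Ioc m (ak (i+1)), (f (Q p t) - f (Λ (i+1)))‖ := abs_add_le _ _
      _ ≤ (Λ (i+1) - Λ i) * (volume (Ioc (ak i) m)).toReal
          + (Λ (i+2) - Λ (i+1)) * (volume (Ioc m (ak (i+1)))).toReal := add_le_add hL hR
      _ = (((d:ℝ)-(i:ℝ))/((d:ℝ)*((d:ℝ)+1))) * (Λ (i+1) - Λ i)
          + (((i:ℝ)+1)/((d:ℝ)*((d:ℝ)+1))) * (Λ (i+2) - Λ (i+1)) := by
        rw [hvolL, hvolR]; ring
  -- final assembly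
  have hfinal : ∑ i ∈ Finset.range d,
      ((((d:ℝ)-(i:ℝ))/((d:ℝ)*((d:ℝ)+1))) * (Λ (i+1) - Λ i)
        + (((i:ℝ)+1)/((d:ℝ)*((d:ℝ)+1))) * (Λ (i+2) - Λ (i+1))) = (b - a)/((d:ℝ)+1) := by
    have e1 : ∀ i ∈ Finset.range d,
        (((d:ℝ)-(i:ℝ))/((d:ℝ)*((d:ℝ)+1))) * (Λ (i+1) - Λ i)
          + (((i:ℝ)+1)/((d:ℝ)*((d:ℝ)+1))) * (Λ (i+2) - Λ (i+1))
        = (1/((d:ℝ)*((d:ℝ)+1))) * (((d:ℝ)-(i:ℝ)) * (Λ (i+1) - Λ i)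
            + ((i:ℝ)+1) * (Λ (i+2) - Λ (i+1))) := fun i _ => by ring
    rw [Finset.sum_congr rfl e1, ← Finset.mul_sum, Finset.sum_add_distrib]
    have e2 : ∑ i ∈ Finset.range d, ((d:ℝ)-(i:ℝ)) * (Λ (i+1) - Λ i)
        = ∑ i ∈ Finset.range (d+1), ((d:ℝ)-(i:ℝ)) * (Λ (i+1) - Λ i) := by
      rw [Finset.sum_range_succ]
      simp
    have e3 : ∑ i ∈ Finset.range d, ((i:ℝ)+1) * (Λ (i+2) - Λ (i+1))
        = ∑ i ∈ Finset.range (d+1), (i:ℝ) * (Λ (i+1) - Λ i) := by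
      rw [Finset.sum_range_succ' (fun i => (i:ℝ) * (Λ (i+1) - Λ i)) d]
      push_cast
      simp
    rw [e2, e3, ← Finset.sum_add_distrib]
    have e4 : ∀ i ∈ Finset.range (d+1),
        ((d:ℝ)-(i:ℝ)) * (Λ (i+1) - Λ i) + (i:ℝ) * (Λ (i+1) - Λ i)
          = (d:ℝ) * (Λ (i+1) - Λ i) := fun i _ => by ring
    rw [Finset.sum_congr rfl e4, ← Finset.mul_sum, Finset.sum_range_sub Λ (d+1), hΛd1, hΛ0]
    field_simp
  calc |(∫ x, f x ∂p) - (1 / d : ℝ) * ∑ i, f (lam i)|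
      = |∑ i ∈ Finset.range d,
          ((∫ t in Ioc (ak i) (ak (i+1)), f (Q p t)) - (1/d : ℝ) * f (Λ (i+1)))| := by
        rw [hint, hsplit, hfin, Finset.mul_sum, ← Finset.sum_sub_distrib]
    _ ≤ ∑ i ∈ Finset.range d,
          |(∫ t in Ioc (ak i) (ak (i+1)), f (Q p t)) - (1/d : ℝ) * f (Λ (i+1))| :=
        Finset.abs_sum_le_sum_abs _ _
    _ ≤ ∑ i ∈ Finset.range d,
          ((((d:ℝ)-(i:ℝ))/((d:ℝ)*((d:ℝ)+1))) * (Λ (i+1) - Λ i)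
            + (((i:ℝ)+1)/((d:ℝ)*((d:ℝ)+1))) * (Λ (i+2) - Λ (i+1))) :=
        Finset.sum_le_sum fun i hi => key i (Finset.mem_range.mp hi)
    _ = (b - a)/((d:ℝ)+1) := hfinal
    _ ≤ (b - a)/(d:ℝ) := by
        exact div_le_div_of_nonneg_left (by linarith) hd0 (by linarith)
end

section
/- Let A be a finite nonempty set, let r, ξ ≥ 1 be integers, let h, t : {1,…,ξ} → {1,…,r} be index maps, and let g_1,…,g_ξ : A × A → ℝ. Suppose every index i ∈ {1,…,r} occurs at least four times among the slots, i.e., |{s : h(s) = i}| + |{s : t(s) = i}| ≥ 4 for every i. Then ( Σ_{a : {1,…,r} → A} ∏_{s=1}^ξ g_s(a_{h(s)}, a_{t(s)}) )² ≤ ∏_{s=1}^ξ Σ_{x,y ∈ A} g_s(x, y)². -/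
open Finset

private lemma cs_sqrt' {A : Type*} [Fintype A] (u v : A → ℝ) (hu : ∀ x, 0 ≤ u x)
    (hv : ∀ x, 0 ≤ v x) :
    ∑ x, Real.sqrt (u x) * Real.sqrt (v x)
      ≤ Real.sqrt (∑ x, u x) * Real.sqrt (∑ x, v x) := by
  have h := Finset.sum_mul_sq_le_sq_mul_sq Finset.univ
    (fun x => Real.sqrt (u x)) (fun x => Real.sqrt (v x))
  have h1 : ∀ x : A, Real.sqrt (u x) ^ 2 = u x := fun x => Real.sq_sqrt (hu x)
  have h2 : ∀ x : A, Real.sqrt (v x) ^ 2 = v x := fun x => Real.sq_sqrt (hv x)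
  simp only [h1, h2] at h
  have hnn : 0 ≤ ∑ x, Real.sqrt (u x) * Real.sqrt (v x) :=
    Finset.sum_nonneg fun x _ => mul_nonneg (Real.sqrt_nonneg _) (Real.sqrt_nonneg _)
  calc ∑ x, Real.sqrt (u x) * Real.sqrt (v x)
      = Real.sqrt ((∑ x, Real.sqrt (u x) * Real.sqrt (v x)) ^ 2) := (Real.sqrt_sq hnn).symm
    _ ≤ Real.sqrt ((∑ x, u x) * ∑ x, v x) := Real.sqrt_le_sqrt h
    _ = Real.sqrt (∑ x, u x) * Real.sqrt (∑ x, v x) :=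
        Real.sqrt_mul (Finset.sum_nonneg fun x _ => hu x) _

private lemma cs_mul' {A : Type*} [Fintype A] (u v : A → ℝ) (hu : ∀ x, 0 ≤ u x)
    (hv : ∀ x, 0 ≤ v x) :
    ∑ x, u x * v x ≤ Real.sqrt (∑ x, u x ^ 2) * Real.sqrt (∑ x, v x ^ 2) := by
  have h := Finset.sum_mul_sq_le_sq_mul_sq Finset.univ u v
  have hnn : 0 ≤ ∑ x, u x * v x :=
    Finset.sum_nonneg fun x _ => mul_nonneg (hu x) (hv x)
  calc ∑ x, u x * v x = Real.sqrt ((∑ x, u x * v x) ^ 2) := (Real.sqrt_sq hnn).symm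
    _ ≤ Real.sqrt ((∑ x, u x ^ 2) * ∑ x, v x ^ 2) := Real.sqrt_le_sqrt h
    _ = _ := Real.sqrt_mul (Finset.sum_nonneg fun x _ => sq_nonneg _) _

/-- The fourth-root bound for four nonnegative functions. -/
private lemma four_bound {A : Type*} [Fintype A] (p1 p2 p3 p4 : A → ℝ)
    (h1 : ∀ x, 0 ≤ p1 x) (h2 : ∀ x, 0 ≤ p2 x) (h3 : ∀ x, 0 ≤ p3 x) (h4 : ∀ x, 0 ≤ p4 x) :
    ∑ x, Real.sqrt (p1 x) * Real.sqrt (p2 x) * (Real.sqrt (p3 x) * Real.sqrt (p4 x))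
      ≤ Real.sqrt (Real.sqrt (∑ x, p1 x ^ 2)) * Real.sqrt (Real.sqrt (∑ x, p2 x ^ 2))
        * (Real.sqrt (Real.sqrt (∑ x, p3 x ^ 2)) * Real.sqrt (Real.sqrt (∑ x, p4 x ^ 2))) := by
  have key : ∑ x, Real.sqrt (p1 x * p2 x) * Real.sqrt (p3 x * p4 x)
      ≤ Real.sqrt (∑ x, p1 x * p2 x) * Real.sqrt (∑ x, p3 x * p4 x) :=
    cs_sqrt' _ _ (fun x => mul_nonneg (h1 x) (h2 x)) (fun x => mul_nonneg (h3 x) (h4 x))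
  have e : ∀ x : A, Real.sqrt (p1 x * p2 x) * Real.sqrt (p3 x * p4 x)
      = Real.sqrt (p1 x) * Real.sqrt (p2 x) * (Real.sqrt (p3 x) * Real.sqrt (p4 x)) := by
    intro x; rw [Real.sqrt_mul (h1 x), Real.sqrt_mul (h3 x)]
  rw [show (∑ x, Real.sqrt (p1 x) * Real.sqrt (p2 x) * (Real.sqrt (p3 x) * Real.sqrt (p4 x)))
      = ∑ x, Real.sqrt (p1 x * p2 x) * Real.sqrt (p3 x * p4 x) from
    Finset.sum_congr rfl fun x _ => (e x).symm ▸ rfl]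
  refine key.trans ?_
  have b12 : Real.sqrt (∑ x, p1 x * p2 x)
      ≤ Real.sqrt (Real.sqrt (∑ x, p1 x ^ 2) * Real.sqrt (∑ x, p2 x ^ 2)) :=
    Real.sqrt_le_sqrt (cs_mul' _ _ h1 h2)
  have b34 : Real.sqrt (∑ x, p3 x * p4 x)
      ≤ Real.sqrt (Real.sqrt (∑ x, p3 x ^ 2) * Real.sqrt (∑ x, p4 x ^ 2)) :=
    Real.sqrt_le_sqrt (cs_mul' _ _ h3 h4)
  calc Real.sqrt (∑ x, p1 x * p2 x) * Real.sqrt (∑ x, p3 x * p4 x)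
      ≤ Real.sqrt (Real.sqrt (∑ x, p1 x ^ 2) * Real.sqrt (∑ x, p2 x ^ 2))
        * Real.sqrt (Real.sqrt (∑ x, p3 x ^ 2) * Real.sqrt (∑ x, p4 x ^ 2)) :=
      mul_le_mul b12 b34 (Real.sqrt_nonneg _) (Real.sqrt_nonneg _)
    _ = _ := by rw [Real.sqrt_mul (Real.sqrt_nonneg _), Real.sqrt_mul (Real.sqrt_nonneg _)]

/-- The core vertex bound: a sum over `A` of a product of at least four square roots is
bounded by the product of fourth roots of the sums of squares. -/
private lemma core_bound {ι A : Type*} [DecidableEq ι] [Fintype A] (E : Finset ι)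
    (φ : ι → A → ℝ) (hφ : ∀ e x, 0 ≤ φ e x) (hE : 4 ≤ E.card) :
    ∑ x, ∏ e ∈ E, Real.sqrt (φ e x)
      ≤ ∏ e ∈ E, Real.sqrt (Real.sqrt (∑ x, φ e x ^ 2)) := by
  classical
  set q : ι → ℝ := fun e => Real.sqrt (Real.sqrt (∑ x, φ e x ^ 2)) with hq
  obtain ⟨P, hPE, hP4⟩ := Finset.exists_subset_card_eq hE
  obtain ⟨a, haP⟩ : P.Nonempty := Finset.card_pos.mp (by omega)
  have hPe : (P.erase a).card = 3 := by rw [Finset.card_erase_of_mem haP, hP4]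
  obtain ⟨b, c, d, hbc, hbd, hcd, hPer⟩ := Finset.card_eq_three.mp hPe
  have haPer : a ∉ P.erase a := Finset.notMem_erase a P
  have hPins : P = insert a (P.erase a) := (Finset.insert_erase haP).symm
  -- pointwise bound: sqrt (φ e x) ≤ q e
  have hpt : ∀ e ∈ E, ∀ x, Real.sqrt (φ e x) ≤ q e := by
    intro e _ x
    apply Real.sqrt_le_sqrt
    have : φ e x = Real.sqrt (φ e x ^ 2) := (Real.sqrt_sq (hφ e x)).symm
    rw [this]
    exact Real.sqrt_le_sqrt (Finset.single_le_sum (fun y _ => sq_nonneg (φ e y))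
      (Finset.mem_univ x))
  have hb : b ∈ P.erase a := by rw [hPer]; simp
  have hc : c ∈ P.erase a := by rw [hPer]; simp
  have hd : d ∈ P.erase a := by rw [hPer]; simp
  have hprodP : ∀ x : A, ∏ e ∈ P, Real.sqrt (φ e x)
      = Real.sqrt (φ a x) * Real.sqrt (φ b x) * (Real.sqrt (φ c x) * Real.sqrt (φ d x)) := by
    intro x
    rw [hPins, Finset.prod_insert haPer, hPer]
    rw [Finset.prod_insert (by simp [hbc, hbd]), Finset.prod_insert (by simp [hcd]),
      Finset.prod_singleton]
    ring
  have hqP : ∏ e ∈ P, q e = q a * q b * (q c * q d) := by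
    rw [hPins, Finset.prod_insert haPer, hPer]
    rw [Finset.prod_insert (by simp [hbc, hbd]), Finset.prod_insert (by simp [hcd]),
      Finset.prod_singleton]
    ring
  have step1 : ∑ x, ∏ e ∈ E, Real.sqrt (φ e x)
      ≤ (∏ e ∈ E \ P, q e) * ∑ x, ∏ e ∈ P, Real.sqrt (φ e x) := by
    rw [Finset.mul_sum]
    apply Finset.sum_le_sum
    intro x _
    rw [← Finset.prod_sdiff hPE]
    apply mul_le_mul_of_nonneg_right
    · exact Finset.prod_le_prod (fun e _ => Real.sqrt_nonneg _)
        (fun e he => hpt e (Finset.mem_sdiff.mp he).1 x)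
    · exact Finset.prod_nonneg fun e _ => Real.sqrt_nonneg _
  have step2 : ∑ x, ∏ e ∈ P, Real.sqrt (φ e x) ≤ ∏ e ∈ P, q e := by
    rw [hqP]
    calc ∑ x, ∏ e ∈ P, Real.sqrt (φ e x)
        = ∑ x, Real.sqrt (φ a x) * Real.sqrt (φ b x) * (Real.sqrt (φ c x) * Real.sqrt (φ d x)) :=
        Finset.sum_congr rfl fun x _ => hprodP x
      _ ≤ q a * q b * (q c * q d) := four_bound _ _ _ _ (hφ a) (hφ b) (hφ c) (hφ d)
  calc ∑ x, ∏ e ∈ E, Real.sqrt (φ e x)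
      ≤ (∏ e ∈ E \ P, q e) * ∑ x, ∏ e ∈ P, Real.sqrt (φ e x) := step1
    _ ≤ (∏ e ∈ E \ P, q e) * ∏ e ∈ P, q e := by
        apply mul_le_mul_of_nonneg_left step2
        exact Finset.prod_nonneg fun e _ => Real.sqrt_nonneg _
    _ = ∏ e ∈ E, q e := Finset.prod_sdiff hPE

private lemma coreV {ι A : Type*} [DecidableEq ι] [Fintype A] (E₁ E₂ : Finset ι)
    (φ ψ : ι → A → ℝ) (hφ : ∀ e x, 0 ≤ φ e x) (hψ : ∀ e x, 0 ≤ ψ e x)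
    (hE : 4 ≤ E₁.card + E₂.card) :
    ∑ x, (∏ e ∈ E₁, Real.sqrt (φ e x)) * ∏ e ∈ E₂, Real.sqrt (ψ e x)
      ≤ (∏ e ∈ E₁, Real.sqrt (Real.sqrt (∑ x, φ e x ^ 2)))
        * ∏ e ∈ E₂, Real.sqrt (Real.sqrt (∑ x, ψ e x ^ 2)) := by
  classical
  have hcard : 4 ≤ (E₁.disjSum E₂).card := by rw [Finset.card_disjSum]; exact hE
  have hnn : ∀ (e : ι ⊕ ι) (x : A), 0 ≤ Sum.elim φ ψ e x := by
    rintro (e | e) x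
    · exact hφ e x
    · exact hψ e x
  have := core_bound (E₁.disjSum E₂) (Sum.elim φ ψ) hnn hcard
  simpa [Finset.prod_disjSum] using this

/-- Lemma B.2, generalized Cauchy–Schwarz. Let `A` be a finite nonempty
set, `h, t : Fin ξ → Fin r` index maps, and `g_s : A × A → ℝ`. If every index `i` occurs at
least four times among the argument slots, then
`(∑_{a : Fin r → A} ∏_s g_s(a_{h s}, a_{t s}))² ≤ ∏_s ∑_{x,y ∈ A} g_s(x,y)²`. -/
theorem stmt_15 {A : Type*} [Fintype A] [Nonempty A] [DecidableEq A]
    (r ξ : ℕ) (hr : 1 ≤ r) (hξ : 1 ≤ ξ)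
    (h t : Fin ξ → Fin r) (g : Fin ξ → A → A → ℝ)
    (hocc : ∀ i : Fin r,
      4 ≤ (Finset.univ.filter fun s => h s = i).card
          + (Finset.univ.filter fun s => t s = i).card) :
    (∑ a : Fin r → A, ∏ s : Fin ξ, g s (a (h s)) (a (t s))) ^ 2
      ≤ ∏ s : Fin ξ, ∑ x : A, ∑ y : A, g s x y ^ 2 := by
  classical
  set S := ∑ a : Fin r → A, ∏ s : Fin ξ, g s (a (h s)) (a (t s)) with hS
  set N : Fin ξ → ℝ := fun s => ∑ x : A, ∑ y : A, g s x y ^ 2 with hN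
  have hNnn : ∀ s, 0 ≤ N s := fun s =>
    Finset.sum_nonneg fun x _ => Finset.sum_nonneg fun y _ => sq_nonneg _
  set R : Fin ξ → A → ℝ := fun s x => Real.sqrt (∑ y, g s x y ^ 2) with hR
  set C : Fin ξ → A → ℝ := fun s y => Real.sqrt (∑ x, g s x y ^ 2) with hC
  have hRnn : ∀ s x, 0 ≤ R s x := fun s x => Real.sqrt_nonneg _
  have hCnn : ∀ s y, 0 ≤ C s y := fun s y => Real.sqrt_nonneg _
  -- pointwise bound
  have hg : ∀ s x y, |g s x y| ≤ Real.sqrt (R s x) * Real.sqrt (C s y) := by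
    intro s x y
    have hgR : |g s x y| ≤ R s x := by
      rw [hR, ← Real.sqrt_sq_eq_abs]
      exact Real.sqrt_le_sqrt (Finset.single_le_sum
        (fun y' _ => sq_nonneg (g s x y')) (Finset.mem_univ y))
    have hgC : |g s x y| ≤ C s y := by
      rw [hC, ← Real.sqrt_sq_eq_abs]
      exact Real.sqrt_le_sqrt (Finset.single_le_sum
        (fun x' _ => sq_nonneg (g s x' y)) (Finset.mem_univ x))
    have h2 : g s x y ^ 2 ≤ R s x * C s y := by
      calc g s x y ^ 2 = |g s x y| * |g s x y| := by rw [abs_mul_abs_self]; ring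
        _ ≤ R s x * C s y := mul_le_mul hgR hgC (abs_nonneg _) (hRnn s x)
    calc |g s x y| = Real.sqrt (g s x y ^ 2) := (Real.sqrt_sq_eq_abs _).symm
      _ ≤ Real.sqrt (R s x * C s y) := Real.sqrt_le_sqrt h2
      _ = _ := Real.sqrt_mul (hRnn s x) _
  set F : Fin r → A → ℝ := fun i x =>
    (∏ s ∈ Finset.univ.filter fun s => h s = i, Real.sqrt (R s x))
      * ∏ s ∈ Finset.univ.filter fun s => t s = i, Real.sqrt (C s x) with hF
  have reindex : ∀ a : Fin r → A,
      (∏ s : Fin ξ, Real.sqrt (R s (a (h s))) * Real.sqrt (C s (a (t s))))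
        = ∏ i : Fin r, F i (a i) := by
    intro a
    rw [Finset.prod_mul_distrib]
    have h1 : (∏ s : Fin ξ, Real.sqrt (R s (a (h s))))
        = ∏ i : Fin r, ∏ s ∈ Finset.univ.filter fun s => h s = i,
            Real.sqrt (R s (a i)) := by
      rw [← Finset.prod_fiberwise_of_maps_to (g := h)
        (fun s _ => Finset.mem_univ (h s)) (fun s => Real.sqrt (R s (a (h s))))]
      exact Finset.prod_congr rfl fun i _ => Finset.prod_congr rfl fun s hs => by
        rw [(Finset.mem_filter.mp hs).2]
    have h2 : (∏ s : Fin ξ, Real.sqrt (C s (a (t s))))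
        = ∏ i : Fin r, ∏ s ∈ Finset.univ.filter fun s => t s = i,
            Real.sqrt (C s (a i)) := by
      rw [← Finset.prod_fiberwise_of_maps_to (g := t)
        (fun s _ => Finset.mem_univ (t s)) (fun s => Real.sqrt (C s (a (t s))))]
      exact Finset.prod_congr rfl fun i _ => Finset.prod_congr rfl fun s hs => by
        rw [(Finset.mem_filter.mp hs).2]
    rw [h1, h2, ← Finset.prod_mul_distrib]
  have hR2 : ∀ s, (∑ x, R s x ^ 2) = N s := by
    intro s
    exact Finset.sum_congr rfl fun x _ => Real.sq_sqrt
      (Finset.sum_nonneg fun y _ => sq_nonneg _)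
  have hC2 : ∀ s, (∑ y, C s y ^ 2) = N s := by
    intro s
    have hcomm : N s = ∑ y : A, ∑ x : A, g s x y ^ 2 := Finset.sum_comm
    rw [hcomm]
    exact Finset.sum_congr rfl fun y _ => Real.sq_sqrt
      (Finset.sum_nonneg fun x _ => sq_nonneg _)
  have key : |S| ≤ ∏ s : Fin ξ, Real.sqrt (N s) := by
    calc |S| ≤ ∑ a : Fin r → A, |∏ s : Fin ξ, g s (a (h s)) (a (t s))| :=
        Finset.abs_sum_le_sum_abs _ _
      _ = ∑ a : Fin r → A, ∏ s : Fin ξ, |g s (a (h s)) (a (t s))| := by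
        exact Finset.sum_congr rfl fun a _ => Finset.abs_prod _ _
      _ ≤ ∑ a : Fin r → A, ∏ s : Fin ξ,
            Real.sqrt (R s (a (h s))) * Real.sqrt (C s (a (t s))) :=
        Finset.sum_le_sum fun a _ => Finset.prod_le_prod
          (fun s _ => abs_nonneg _) (fun s _ => hg s _ _)
      _ = ∑ a : Fin r → A, ∏ i : Fin r, F i (a i) :=
        Finset.sum_congr rfl fun a _ => reindex a
      _ = ∏ i : Fin r, ∑ x : A, F i x := (Fintype.prod_sum (fun i (x : A) => F i x)).symm
      _ ≤ ∏ i : Fin r,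
            ((∏ s ∈ Finset.univ.filter fun s => h s = i,
                Real.sqrt (Real.sqrt (∑ x, R s x ^ 2)))
              * ∏ s ∈ Finset.univ.filter fun s => t s = i,
                Real.sqrt (Real.sqrt (∑ y, C s y ^ 2))) := by
        apply Finset.prod_le_prod
        · intro i _
          exact Finset.sum_nonneg fun x _ => mul_nonneg
            (Finset.prod_nonneg fun s _ => Real.sqrt_nonneg _)
            (Finset.prod_nonneg fun s _ => Real.sqrt_nonneg _)
        · intro i _
          exact coreV _ _ R C hRnn hCnn (hocc i)
      _ = (∏ i : Fin r, ∏ s ∈ Finset.univ.filter fun s => h s = i,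
              Real.sqrt (Real.sqrt (∑ x, R s x ^ 2)))
            * ∏ i : Fin r, ∏ s ∈ Finset.univ.filter fun s => t s = i,
              Real.sqrt (Real.sqrt (∑ y, C s y ^ 2)) := Finset.prod_mul_distrib
      _ = (∏ s : Fin ξ, Real.sqrt (Real.sqrt (∑ x, R s x ^ 2)))
            * ∏ s : Fin ξ, Real.sqrt (Real.sqrt (∑ y, C s y ^ 2)) := by
        rw [Finset.prod_fiberwise_of_maps_to (g := h)
          (fun s _ => Finset.mem_univ (h s)),
          Finset.prod_fiberwise_of_maps_to (g := t)
          (fun s _ => Finset.mem_univ (t s))]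
      _ = ∏ s : Fin ξ, Real.sqrt (N s) := by
        rw [← Finset.prod_mul_distrib]
        refine Finset.prod_congr rfl fun s _ => ?_
        rw [hR2 s, hC2 s]
        exact Real.mul_self_sqrt (Real.sqrt_nonneg _)
  calc S ^ 2 = |S| ^ 2 := (sq_abs S).symm
    _ ≤ (∏ s : Fin ξ, Real.sqrt (N s)) ^ 2 := pow_le_pow_left₀ (abs_nonneg S) key 2
    _ = ∏ s : Fin ξ, Real.sqrt (N s) ^ 2 := (Finset.prod_pow _ _ _).symm
    _ = ∏ s : Fin ξ, N s := Finset.prod_congr rfl fun s _ => Real.sq_sqrt (hNnn s)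
end

section
/- There exists an absolute constant C > 0 such that for every integer k ≥ 1 and every function f : ℝ → ℝ that is Lipschitz with constant 1 and satisfies |f(x)| ≤ 1 for all x ∈ [−1, 1], there exists a real polynomial P of degree at most k such that sup_{x ∈ [−1,1]} |f(x) − P(x)| ≤ C/k and the coefficients of P satisfy Σ_j (coefficient of x^j in P)² ≤ C·9^k. -/
open Real Polynomial Finset intervalIntegral Polynomial.Chebyshev

set_option maxHeartbeats 1000000

noncomputable section

namespace Stmt16

def ac (n m : ℕ) : ℝ := if m = 0 then (n : ℝ) else 2 * ((n : ℝ) - m)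

def Ds (n : ℕ) (t : ℝ) : ℝ := ∑ m ∈ Finset.range n, ac n m * Real.cos (m * t)

def Kf (n : ℕ) (t : ℝ) : ℝ := (Ds n t) ^ 2

lemma ac_succ (n m : ℕ) : ac (n+1) m = ac n m + (if m = 0 then 1 else 2) := by
  unfold ac
  by_cases h : m = 0 <;> simp [h] <;> push_cast <;> ring

lemma ac_self (n : ℕ) : ac n n = if n = 0 then (n:ℝ) else 0 := by
  unfold ac; by_cases h : n = 0 <;> simp [h]

lemma ac_nonneg {n m : ℕ} (h : m < n) : 0 ≤ ac n m := by
  unfold ac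
  by_cases hm : m = 0
  · simp [hm]
  · simp [hm]; omega

lemma sum_ite12 (n : ℕ) : ∑ m ∈ Finset.range (n+1), (if m = 0 then (1:ℝ) else 2) = 1 + 2*n := by
  rw [Finset.sum_range_succ']
  simp
  ring

lemma sum_ac (n : ℕ) : ∑ m ∈ Finset.range n, ac n m = (n:ℝ)^2 := by
  induction n with
  | zero => simp
  | succ n ih =>
    have : ∀ m ∈ Finset.range (n+1), ac (n+1) m = ac n m + (if m = 0 then (1:ℝ) else 2) :=
      fun m _ => ac_succ n m
    rw [Finset.sum_congr rfl this, Finset.sum_add_distrib, sum_ite12,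
      Finset.sum_range_succ, ih, ac_self]
    by_cases h : n = 0 <;> simp [h] <;> push_cast <;> ring

lemma Ds_succ (n : ℕ) (t : ℝ) :
    Ds (n+1) t = Ds n t + (1 + 2 * ∑ m ∈ Finset.range n, Real.cos ((m+1) * t)) := by
  unfold Ds
  have : ∀ m ∈ Finset.range (n+1), ac (n+1) m * Real.cos (m*t)
      = ac n m * Real.cos (m*t) + (if m = 0 then (1:ℝ) else 2) * Real.cos (m*t) :=
    fun m _ => by rw [ac_succ]; ring
  rw [Finset.sum_congr rfl this, Finset.sum_add_distrib, Finset.sum_range_succ _ n, ac_self]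
  have h2 : ∑ m ∈ Finset.range (n+1), (if m = 0 then (1:ℝ) else 2) * Real.cos (m*t)
      = 1 + ∑ m ∈ Finset.range n, 2 * Real.cos ((m+1)*t) := by
    rw [Finset.sum_range_succ']
    simp only [Nat.cast_add, Nat.cast_one]
    norm_num
    rw [add_comm]
  rw [h2]
  by_cases h : n = 0 <;> simp [h, Finset.mul_sum] <;> ring_nf

lemma dirichlet (l : ℕ) (t : ℝ) :
    Real.sin (t/2) * (1 + 2 * ∑ m ∈ Finset.range l, Real.cos ((m+1) * t))
      = Real.sin ((2*(l:ℝ)+1) * (t/2)) := by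
  induction l with
  | zero => norm_num
  | succ l ih =>
    rw [Finset.sum_range_succ]
    have key : Real.sin (((l:ℝ)+1)*t + t/2) - Real.sin (((l:ℝ)+1)*t - t/2)
        = 2 * Real.cos (((l:ℝ)+1)*t) * Real.sin (t/2) := by
      rw [Real.sin_add, Real.sin_sub]; ring
    have e1 : ((l:ℝ)+1)*t + t/2 = (2*((l:ℝ)+1)+1) * (t/2) := by ring
    have e2 : ((l:ℝ)+1)*t - t/2 = (2*(l:ℝ)+1) * (t/2) := by ring
    rw [e1, e2] at key
    push_cast
    push_cast at ih
    linear_combination ih - key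

lemma fejer (n : ℕ) (t : ℝ) :
    Real.sin (t/2)^2 * Ds n t = Real.sin ((n:ℝ)*(t/2))^2 := by
  induction n with
  | zero => simp [Ds]
  | succ n ih =>
    rw [Ds_succ]
    have dir := dirichlet n t
    -- sin(t/2)^2*(Ds n t + dirichletsum) = sin(nt/2)^2 + sin(t/2)*sin((2n+1)(t/2))
    have prod : Real.sin (t/2) * Real.sin ((2*(n:ℝ)+1)*(t/2))
        = (Real.cos ((n:ℝ)*t) - Real.cos (((n:ℝ)+1)*t))/2 := by
      have c1 := Real.cos_sub ((2*(n:ℝ)+1)*(t/2)) (t/2)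
      have c2 := Real.cos_add ((2*(n:ℝ)+1)*(t/2)) (t/2)
      have e1 : (2*(n:ℝ)+1)*(t/2) - t/2 = (n:ℝ)*t := by ring
      have e2 : (2*(n:ℝ)+1)*(t/2) + t/2 = ((n:ℝ)+1)*t := by ring
      rw [e1] at c1; rw [e2] at c2
      linarith
    have h1 : Real.sin ((n:ℝ)*(t/2))^2 = (1 - Real.cos ((n:ℝ)*t))/2 := by
      have := Real.sin_sq_eq_half_sub ((n:ℝ)*(t/2))
      rw [this]; rw [show 2*((n:ℝ)*(t/2)) = (n:ℝ)*t by ring]; ring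
    have h2 : Real.sin (((n:ℝ)+1)*(t/2))^2 = (1 - Real.cos (((n:ℝ)+1)*t))/2 := by
      have := Real.sin_sq_eq_half_sub (((n:ℝ)+1)*(t/2))
      rw [this]; rw [show 2*(((n:ℝ)+1)*(t/2)) = ((n:ℝ)+1)*t by ring]; ring
    push_cast
    linear_combination ih + Real.sin (t/2) * dir + prod + h1 - h2

lemma Ds_abs_le (n : ℕ) (t : ℝ) : |Ds n t| ≤ (n:ℝ)^2 := by
  calc |Ds n t| ≤ ∑ m ∈ Finset.range n, |ac n m * Real.cos (m*t)| :=
        Finset.abs_sum_le_sum_abs _ _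
    _ ≤ ∑ m ∈ Finset.range n, ac n m := by
        refine Finset.sum_le_sum fun m hm => ?_
        rw [abs_mul, abs_of_nonneg (ac_nonneg (Finset.mem_range.1 hm))]
        have : |Real.cos (m*t)| ≤ 1 := Real.abs_cos_le_one _
        nlinarith [ac_nonneg (Finset.mem_range.1 hm), abs_nonneg (Real.cos (m*t))]
    _ = (n:ℝ)^2 := sum_ac n

lemma Kf_nonneg (n : ℕ) (t : ℝ) : 0 ≤ Kf n t := sq_nonneg _

lemma Kf_le (n : ℕ) (t : ℝ) : Kf n t ≤ (n:ℝ)^4 := by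
  have h := Ds_abs_le n t
  have := abs_nonneg (Ds n t)
  calc Kf n t = |Ds n t|^2 := (sq_abs _).symm
    _ ≤ ((n:ℝ)^2)^2 := by nlinarith
    _ = (n:ℝ)^4 := by ring

lemma continuous_Ds (n : ℕ) : Continuous (Ds n) := by
  unfold Ds
  exact continuous_finset_sum _ fun m _ =>
    continuous_const.mul (Real.continuous_cos.comp (continuous_const.mul continuous_id))

lemma continuous_Kf (n : ℕ) : Continuous (Kf n) := (continuous_Ds n).pow 2

lemma Ds_even (n : ℕ) (t : ℝ) : Ds n (-t) = Ds n t := by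
  unfold Ds
  refine Finset.sum_congr rfl fun m _ => ?_
  rw [show (m:ℝ)*(-t) = -((m:ℝ)*t) by ring, Real.cos_neg]

lemma Kf_even (n : ℕ) (t : ℝ) : Kf n (-t) = Kf n t := by unfold Kf; rw [Ds_even]

lemma Kf_periodic (n : ℕ) (t : ℝ) : Kf n (t + 2*π) = Kf n t := by
  unfold Kf Ds
  congr 1
  refine Finset.sum_congr rfl fun m _ => ?_
  have : (m:ℝ)*(t + 2*π) = (m:ℝ)*t + (m:ℤ)*(2*π) := by push_cast; ring
  rw [this, Real.cos_add_int_mul_two_pi]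

lemma Kf_quartic (n : ℕ) {t : ℝ} (ht0 : t ≠ 0) (ht : |t| ≤ π) : Kf n t ≤ π^4 / t^4 := by
  have hsin : |t|/π ≤ Real.sin (|t|/2) := by
    have h1 : 0 ≤ |t|/2 := by positivity
    have h2 : |t|/2 ≤ π/2 := by linarith
    simpa using Real.mul_le_sin h1 h2
  have hpos : 0 < |t| := abs_pos.2 ht0
  have hsinsq : t^2/π^2 ≤ Real.sin (t/2)^2 := by
    have : Real.sin (t/2)^2 = Real.sin (|t|/2)^2 := by
      rcases abs_cases t with ⟨h,_⟩|⟨h,_⟩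
      · rw [h]
      · rw [h]; rw [show -t/2 = -(t/2) by ring, Real.sin_neg]; ring
    rw [this]
    have h0 : 0 ≤ |t|/π := by positivity
    calc t^2/π^2 = (|t|/π)^2 := by rw [div_pow, sq_abs]
      _ ≤ Real.sin (|t|/2)^2 := by nlinarith
  have hDs : Real.sin (t/2)^2 * Ds n t = Real.sin ((n:ℝ)*(t/2))^2 := fejer n t
  have hs2pos : 0 < Real.sin (t/2)^2 := by
    have : 0 < t^2/π^2 := by positivity
    linarith
  have hKf : Kf n t = (Real.sin ((n:ℝ)*(t/2))^2)^2 / (Real.sin (t/2)^2)^2 := by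
    unfold Kf
    rw [eq_div_iff (by positivity)]
    linear_combination (Real.sin (t/2)^2 * Ds n t + Real.sin ((n:ℝ)*(t/2))^2) * hDs
  rw [hKf]
  have hb1 : (Real.sin ((n:ℝ)*(t/2))^2)^2 ≤ 1 := by
    have := Real.sin_sq_le_one ((n:ℝ)*(t/2))
    nlinarith [sq_nonneg (Real.sin ((n:ℝ)*(t/2)))]
  have hc : 0 < t^4/π^4 := by
    have : t^4 > 0 := by positivity
    positivity
  have hcd : t^4/π^4 ≤ (Real.sin (t/2)^2)^2 := by
    have h0 : (0:ℝ) ≤ t^2/π^2 := by positivity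
    calc t^4/π^4 = (t^2/π^2)*(t^2/π^2) := by ring
      _ ≤ (Real.sin (t/2)^2)*(Real.sin (t/2)^2) := mul_le_mul hsinsq hsinsq h0 (sq_nonneg _)
      _ = (Real.sin (t/2)^2)^2 := by ring
  calc (Real.sin ((n:ℝ)*(t/2))^2)^2 / (Real.sin (t/2)^2)^2 ≤ 1 / (t^4/π^4) :=
        div_le_div₀ (by norm_num) hb1 hc hcd
    _ = π^4 / t^4 := by rw [one_div_div]

lemma int_cos_freq (l : ℤ) : ∫ t in (-π)..π, Real.cos (l*t) = if l = 0 then 2*π else 0 := by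
  by_cases h : l = 0
  · subst h
    simp only [Int.cast_zero, zero_mul, Real.cos_zero, if_true]
    rw [intervalIntegral.integral_const]
    simp
    ring
  · simp only [h, if_false]
    have hl : ((l:ℝ)) ≠ 0 := by exact_mod_cast h
    have := intervalIntegral.integral_comp_mul_left (fun x => Real.cos x) hl (a := -π) (b := π)
    rw [this]
    rw [integral_cos]
    have h1 : Real.sin ((l:ℝ)*π) = 0 := Real.sin_int_mul_pi l
    have h2 : Real.sin ((l:ℝ)*(-π)) = 0 := by
      rw [show (l:ℝ)*(-π) = -((l:ℝ)*π) by ring, Real.sin_neg, h1]; ring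
    rw [h1, h2]
    simp

lemma orth (m m' : ℕ) : (∫ t in (-π)..π, Real.cos (m*t) * Real.cos (m'*t))
    = (if m = m' then π else 0) + (if m = 0 ∧ m' = 0 then π else 0) := by
  have key : ∀ t:ℝ, Real.cos (m*t) * Real.cos (m'*t)
      = (Real.cos ((((m:ℤ)+m'):ℤ)*t) + Real.cos ((((m:ℤ)-m'):ℤ)*t))/2 := by
    intro t
    have c1 := Real.cos_add ((m:ℝ)*t) ((m':ℝ)*t)
    have c2 := Real.cos_sub ((m:ℝ)*t) ((m':ℝ)*t)
    have e1 : ((((m:ℤ)+m'):ℤ):ℝ)*t = (m:ℝ)*t + (m':ℝ)*t := by push_cast; ring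
    have e2 : ((((m:ℤ)-m'):ℤ):ℝ)*t = (m:ℝ)*t - (m':ℝ)*t := by push_cast; ring
    rw [e1, e2, c1, c2]; ring
  rw [intervalIntegral.integral_congr (fun t _ => key t)]
  have hint : ∀ l : ℤ, IntervalIntegrable (fun t => Real.cos ((l:ℝ)*t)) MeasureTheory.volume (-π) π :=
    fun l => (Real.continuous_cos.comp (continuous_const.mul continuous_id)).intervalIntegrable _ _
  rw [show (fun t => (Real.cos ((((m:ℤ)+m'):ℤ)*t) + Real.cos ((((m:ℤ)-m'):ℤ)*t))/2)
      = (fun t => (Real.cos ((((m:ℤ)+m'):ℤ)*t) + Real.cos ((((m:ℤ)-m'):ℤ)*t)) * (1/2)) from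
    funext fun t => by ring]
  rw [intervalIntegral.integral_mul_const, intervalIntegral.integral_add (hint _) (hint _)]
  rw [int_cos_freq, int_cos_freq]
  by_cases h1 : m = m'
  · by_cases h0 : m = 0
    · subst h1; subst h0; norm_num; ring
    · have : ¬((m:ℤ)+m' = 0) := by omega
      have h2 : ((m:ℤ)-m' = 0) := by omega
      have h0' : ¬ m' = 0 := by omega
      simp [this, h2, h1, h0, h0']
      ring
  · have hne : ¬((m:ℤ)-m' = 0) := by omega
    by_cases hz : (m:ℤ)+m' = 0
    · exact absurd (by omega : m = m') h1
    · have hnz : ¬(m = 0 ∧ m' = 0) := by omega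
      simp [hz, hne, h1, hnz]

def Lam (n : ℕ) : ℝ := π * ((n:ℝ)^2 + ∑ m ∈ Finset.range n, (ac n m)^2)

lemma int_Kf (n : ℕ) (hn : 1 ≤ n) : ∫ t in (-π)..π, Kf n t = Lam n := by
  have hccos : ∀ c:ℝ, Continuous (fun t:ℝ => Real.cos (c*t)) :=
    fun c => Real.continuous_cos.comp (continuous_const.mul continuous_id)
  have hexp : ∀ t:ℝ, Kf n t = ∑ m ∈ Finset.range n, ∑ m' ∈ Finset.range n,
      (ac n m * ac n m') * (Real.cos (m*t) * Real.cos (m'*t)) := by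
    intro t
    unfold Kf Ds
    rw [sq, Finset.sum_mul_sum]
    exact Finset.sum_congr rfl fun m _ => Finset.sum_congr rfl fun m' _ => by ring
  rw [intervalIntegral.integral_congr (g := fun t => ∑ m ∈ Finset.range n, ∑ m' ∈ Finset.range n,
      (ac n m * ac n m') * (Real.cos (m*t) * Real.cos (m'*t))) (fun t _ => hexp t)]
  have h1 : (∫ t in (-π)..π, ∑ m ∈ Finset.range n, ∑ m' ∈ Finset.range n,
        (ac n m * ac n m') * (Real.cos (m*t) * Real.cos (m'*t)))
      = ∑ m ∈ Finset.range n, ∑ m' ∈ Finset.range n,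
        (ac n m * ac n m') * ∫ t in (-π)..π, Real.cos (m*t) * Real.cos (m'*t) := by
    have key : ∀ (F : ℕ → ℝ → ℝ), (∀ m ∈ Finset.range n, Continuous (F m)) →
        (∫ t in (-π)..π, ∑ m ∈ Finset.range n, F m t)
          = ∑ m ∈ Finset.range n, ∫ t in (-π)..π, F m t :=
      fun F hF => intervalIntegral.integral_finset_sum
        (fun m hm => ((hF m hm).intervalIntegrable _ _))
    rw [key (fun m t => ∑ m' ∈ Finset.range n, (ac n m * ac n m') * (Real.cos (m*t) * Real.cos (m'*t)))
      (fun m _ => continuous_finset_sum _ fun m' _ => continuous_const.mul ((hccos m).mul (hccos m')))]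
    refine Finset.sum_congr rfl fun m _ => ?_
    rw [key (fun m' t => (ac n m * ac n m') * (Real.cos (m*t) * Real.cos (m'*t)))
      (fun m' _ => continuous_const.mul ((hccos m).mul (hccos m')))]
    exact Finset.sum_congr rfl fun m' _ => intervalIntegral.integral_const_mul _ _
  rw [h1]
  have h2 : ∀ m ∈ Finset.range n, ∀ m' ∈ Finset.range n,
      (ac n m * ac n m') * (∫ t in (-π)..π, Real.cos (m*t) * Real.cos (m'*t))
      = (if m' = m then ac n m * ac n m' * π else 0)
        + (if m = 0 then (if m' = 0 then ac n m * ac n m' * π else 0) else 0) := by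
    intro m _ m' _
    rw [orth]
    split_ifs <;> first | ring1 | (exfalso; omega)
  rw [Finset.sum_congr rfl fun m hm => Finset.sum_congr rfl fun m' hm' => h2 m hm m' hm']
  have h3 : ∀ m ∈ Finset.range n,
      (∑ m' ∈ Finset.range n, ((if m' = m then ac n m * ac n m' * π else 0)
        + (if m = 0 then (if m' = 0 then ac n m * ac n m' * π else 0) else 0)))
      = (ac n m)^2 * π + (if m = 0 then (ac n 0)^2 * π else 0) := by
    intro m hm
    rw [Finset.sum_add_distrib]
    congr 1
    · rw [Finset.sum_ite_eq' (Finset.range n) m (fun m' => ac n m * ac n m' * π)]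
      rw [if_pos hm]; ring
    · by_cases h : m = 0
      · subst h
        simp only [if_true]
        rw [Finset.sum_ite_eq' (Finset.range n) 0 (fun m' => ac n 0 * ac n m' * π)]
        have : (0:ℕ) ∈ Finset.range n := Finset.mem_range.2 hn
        rw [if_pos this]; ring
      · simp [h]
  rw [Finset.sum_congr rfl h3, Finset.sum_add_distrib]
  have h4 : (∑ m ∈ Finset.range n, (if m = 0 then (ac n 0)^2 * π else 0)) = (ac n 0)^2 * π := by
    rw [Finset.sum_ite_eq' (Finset.range n) 0 (fun _ => (ac n 0)^2 * π)]
    rw [if_pos (Finset.mem_range.2 hn)]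
  rw [h4]
  have h5 : ac n 0 = (n:ℝ) := by simp [ac]
  rw [h5]
  unfold Lam
  rw [← Finset.sum_mul]
  ring

lemma sum_sq_shift (n : ℕ) : ∑ m ∈ Finset.range n, ((m:ℝ)+1)^2 = (n:ℝ)*((n:ℝ)+1)*(2*(n:ℝ)+1)/6 := by
  induction n with
  | zero => simp
  | succ n ih => rw [Finset.sum_range_succ, ih]; push_cast; ring

lemma sum_sq_reflect (n : ℕ) : ∑ m ∈ Finset.range n, ((n:ℝ)-m)^2 = (n:ℝ)*((n:ℝ)+1)*(2*(n:ℝ)+1)/6 := by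
  rw [← sum_sq_shift n, ← Finset.sum_range_reflect (fun j => ((j:ℝ)+1)^2) n]
  refine Finset.sum_congr rfl fun m hm => ?_
  have hm' : m < n := Finset.mem_range.1 hm
  have : ((n - 1 - m : ℕ):ℝ) = (n:ℝ) - 1 - m := by
    have h1 : m ≤ n - 1 := by omega
    have h2 : (1:ℕ) ≤ n := by omega
    rw [Nat.cast_sub h1, Nat.cast_sub h2]
    norm_num
  rw [this]
  ring

lemma Lam_lower (n : ℕ) : π * (n:ℝ)^3/3 ≤ Lam n := by
  have h1 : ∀ m ∈ Finset.range n, ((n:ℝ)-m)^2 ≤ (ac n m)^2 := by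
    intro m hm
    have hm' : m < n := Finset.mem_range.1 hm
    unfold ac
    by_cases h : m = 0
    · simp [h]
    · simp only [h, if_false]
      have hnm : (0:ℝ) ≤ (n:ℝ) - m := by
        have : (m:ℝ) ≤ n := by exact_mod_cast hm'.le
        linarith
      nlinarith
  have h2 : ∑ m ∈ Finset.range n, ((n:ℝ)-m)^2 ≤ ∑ m ∈ Finset.range n, (ac n m)^2 :=
    Finset.sum_le_sum h1
  rw [sum_sq_reflect] at h2
  have h3 : (n:ℝ)^3/3 ≤ (n:ℝ)*((n:ℝ)+1)*(2*(n:ℝ)+1)/6 := by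
    have : (0:ℝ) ≤ n := Nat.cast_nonneg n
    nlinarith
  unfold Lam
  have h4 : (0:ℝ) ≤ (n:ℝ)^2 := sq_nonneg _
  nlinarith [Real.pi_pos]

lemma Lam_pos (n : ℕ) (hn : 1 ≤ n) : 0 < Lam n := by
  have h := Lam_lower n
  have h1 : (1:ℝ) ≤ n := by exact_mod_cast hn
  have h2 : (0:ℝ) < (n:ℝ)^3 := by positivity
  have h3 : 0 < π * (n:ℝ)^3 / 3 := by positivity
  linarith

lemma tail (n : ℕ) (hn : 1 ≤ n) : ∫ t in (-π)..π, |t| * Kf n t ≤ 100*(n:ℝ)^2 := by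
  have hn1 : (1:ℝ) ≤ (n:ℝ) := by exact_mod_cast hn
  have hnpos : (0:ℝ) < n := by linarith
  have hcont : Continuous (fun t => |t| * Kf n t) := continuous_abs.mul (continuous_Kf n)
  have hint : ∀ a b : ℝ, IntervalIntegrable (fun t => |t| * Kf n t) MeasureTheory.volume a b :=
    fun a b => hcont.intervalIntegrable a b
  have h1n : (1:ℝ)/(n:ℝ) ≤ π := by
    have : (1:ℝ)/(n:ℝ) ≤ 1 := by
      rw [div_le_one hnpos]; exact hn1
    linarith [Real.pi_gt_three]
  have h1npos : (0:ℝ) < 1/(n:ℝ) := by positivity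
  -- fold to [0, π]
  have hneg : ∫ t in (-π)..(0:ℝ), |t| * Kf n t = ∫ t in (0:ℝ)..π, |t| * Kf n t := by
    have hcn := intervalIntegral.integral_comp_neg (a := (0:ℝ)) (b := π)
      (f := fun t => |t| * Kf n t)
    rw [neg_zero] at hcn
    rw [← hcn]
    refine intervalIntegral.integral_congr fun t _ => ?_
    simp only [abs_neg, Kf_even]
  have hsplit := intervalIntegral.integral_add_adjacent_intervals
    (a := -π) (b := (0:ℝ)) (c := π) (hint _ _) (hint _ _)
  -- piece 1
  have hp1 : ∫ t in (0:ℝ)..(1/(n:ℝ)), |t| * Kf n t ≤ (n:ℝ)^2/2 := by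
    have hmono : ∫ t in (0:ℝ)..(1/(n:ℝ)), |t| * Kf n t
        ≤ ∫ t in (0:ℝ)..(1/(n:ℝ)), t * (n:ℝ)^4 := by
      refine intervalIntegral.integral_mono_on h1npos.le (hint _ _)
        ((continuous_id.mul continuous_const).intervalIntegrable _ _) fun t ht => ?_
      obtain ⟨ht0, _⟩ := ht
      rw [abs_of_nonneg ht0]
      exact mul_le_mul_of_nonneg_left (Kf_le n t) ht0
    have hval : ∫ t in (0:ℝ)..(1/(n:ℝ)), t * (n:ℝ)^4 = (n:ℝ)^2/2 := by
      rw [intervalIntegral.integral_mul_const, integral_id]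
      field_simp
      ring
    linarith
  -- piece 2
  have hp2 : ∫ t in (1/(n:ℝ))..π, |t| * Kf n t ≤ π^4*(n:ℝ)^2/2 := by
    have hmono : ∫ t in (1/(n:ℝ))..π, |t| * Kf n t
        ≤ ∫ t in (1/(n:ℝ))..π, π^4 * t^(-3:ℤ) := by
      have hii : IntervalIntegrable (fun t:ℝ => π^4 * t^(-3:ℤ)) MeasureTheory.volume (1/(n:ℝ)) π := by
        apply IntervalIntegrable.const_mul
        apply intervalIntegral.intervalIntegrable_zpow
        right
        rw [Set.uIcc_of_le h1n]
        intro hmem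
        exact absurd hmem.1 (by linarith)
      refine intervalIntegral.integral_mono_on h1n (hint _ _) hii fun t ht => ?_
      obtain ⟨ht1, ht2⟩ := ht
      have htpos : 0 < t := lt_of_lt_of_le h1npos ht1
      have habs : |t| = t := abs_of_pos htpos
      have hq := Kf_quartic n (ne_of_gt htpos) (by rw [habs]; exact ht2)
      rw [habs]
      have : t * Kf n t ≤ t * (π^4/t^4) := mul_le_mul_of_nonneg_left hq htpos.le
      calc t * Kf n t ≤ t * (π^4/t^4) := this
        _ = π^4 * t^(-3:ℤ) := by
            have e : t^(-3:ℤ) = (t^3)⁻¹ := by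
              rw [zpow_neg]
              norm_cast
            rw [e]
            field_simp
    have hzint : ∫ t in (1/(n:ℝ))..π, t^(-3:ℤ) = ((π:ℝ)^(-2:ℤ) - (1/(n:ℝ))^(-2:ℤ))/(-2) := by
      rw [integral_zpow]
      · norm_num
      · right
        constructor
        · norm_num
        · rw [Set.uIcc_of_le h1n]
          intro hmem
          exact absurd hmem.1 (by linarith)
    have hval : ∫ t in (1/(n:ℝ))..π, π^4 * t^(-3:ℤ) = π^4 * (((π:ℝ)^(-2:ℤ) - (1/(n:ℝ))^(-2:ℤ))/(-2)) := by
      rw [intervalIntegral.integral_const_mul, hzint]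
    have hsimp : π^4 * (((π:ℝ)^(-2:ℤ) - (1/(n:ℝ))^(-2:ℤ))/(-2)) ≤ π^4*(n:ℝ)^2/2 := by
      have e1 : ((1:ℝ)/(n:ℝ))^(-2:ℤ) = (n:ℝ)^2 := by
        rw [one_div, zpow_neg, inv_zpow, inv_inv]
        norm_cast
      have e2 : (0:ℝ) ≤ (π:ℝ)^(-2:ℤ) := by positivity
      rw [e1]
      have hπ4 : (0:ℝ) ≤ π^4 := by positivity
      have e3 : ((π:ℝ)^(-2:ℤ) - (n:ℝ)^2)/(-2) = ((n:ℝ)^2 - (π:ℝ)^(-2:ℤ))/2 := by ring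
      rw [e3]
      have h5 : ((n:ℝ)^2 - (π:ℝ)^(-2:ℤ))/2 ≤ (n:ℝ)^2/2 := by linarith
      calc π^4 * (((n:ℝ)^2 - (π:ℝ)^(-2:ℤ))/2) ≤ π^4 * ((n:ℝ)^2/2) :=
            mul_le_mul_of_nonneg_left h5 hπ4
        _ = π^4*(n:ℝ)^2/2 := by ring
    linarith
  have hsplit2 := intervalIntegral.integral_add_adjacent_intervals
    (a := (0:ℝ)) (b := 1/(n:ℝ)) (c := π) (hint _ _) (hint _ _)
  have hpi4 : π^4 ≤ 99 := by
    have h1 := Real.pi_lt_d2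
    have h2 := Real.pi_gt_three
    have h3 : π^2 ≤ 9.93 := by nlinarith
    nlinarith
  have hfin : ∫ t in (0:ℝ)..π, |t| * Kf n t ≤ 50*(n:ℝ)^2 := by
    rw [← hsplit2]
    have : (n:ℝ)^2/2 + π^4*(n:ℝ)^2/2 ≤ 50*(n:ℝ)^2 := by nlinarith [sq_nonneg (n:ℝ)]
    linarith
  rw [← hsplit, hneg]
  nlinarith [sq_nonneg (n:ℝ)]

def Cf (f : ℝ → ℝ) (l : ℝ) : ℝ := ∫ s in (-π)..π, f (Real.cos s) * Real.cos (l * s)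

def Pp (f : ℝ → ℝ) (n : ℕ) : Polynomial ℝ :=
  ∑ m ∈ Finset.range n, ∑ m' ∈ Finset.range n,
    Polynomial.C (ac n m * ac n m' / (2 * Lam n)) *
      (Polynomial.C (Cf f ((m:ℝ) + (m':ℝ))) * T ℝ ((m:ℤ) + (m':ℤ)) +
       Polynomial.C (Cf f ((m:ℝ) - (m':ℝ))) * T ℝ ((m:ℤ) - (m':ℤ)))

lemma odd_int (f : ℝ → ℝ) (l : ℝ) :
    ∫ s in (-π)..π, f (Real.cos s) * Real.sin (l*s) = 0 := by
  have h := intervalIntegral.integral_comp_neg (a := -π) (b := π)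
    (f := fun s => f (Real.cos s) * Real.sin (l*s))
  rw [neg_neg] at h
  have h2 : (∫ s in (-π)..π, f (Real.cos (-s)) * Real.sin (l*(-s)))
      = - ∫ s in (-π)..π, f (Real.cos s) * Real.sin (l*s) := by
    rw [← intervalIntegral.integral_neg]
    refine intervalIntegral.integral_congr fun s _ => ?_
    rw [Real.cos_neg, show l*(-s) = -(l*s) by ring, Real.sin_neg]
    ring
  rw [h2] at h
  linarith

lemma Cf_bound (f : ℝ → ℝ) (hfc : Continuous f)
    (hb : ∀ x ∈ Set.Icc (-1:ℝ) 1, |f x| ≤ 1) (l : ℝ) : |Cf f l| ≤ 2*π := by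
  have hpi := Real.pi_pos
  have hcont : Continuous fun s => f (Real.cos s) * Real.cos (l*s) :=
    (hfc.comp Real.continuous_cos).mul
      (Real.continuous_cos.comp (continuous_const.mul continuous_id))
  unfold Cf
  have h1 : |∫ s in (-π)..π, f (Real.cos s) * Real.cos (l*s)|
      ≤ ∫ s in (-π)..π, |f (Real.cos s) * Real.cos (l*s)| := by
    exact intervalIntegral.abs_integral_le_integral_abs (by linarith)
  have h2 : (∫ s in (-π)..π, |f (Real.cos s) * Real.cos (l*s)|)
      ≤ ∫ _s in (-π)..π, (1:ℝ) := by
    refine intervalIntegral.integral_mono_on (by linarith) (hcont.abs.intervalIntegrable _ _)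
      (intervalIntegrable_const) fun s _ => ?_
    rw [abs_mul]
    have hf1 : |f (Real.cos s)| ≤ 1 :=
      hb _ ⟨Real.neg_one_le_cos s, Real.cos_le_one s⟩
    have hc1 : |Real.cos (l*s)| ≤ 1 := Real.abs_cos_le_one _
    nlinarith [abs_nonneg (f (Real.cos s)), abs_nonneg (Real.cos (l*s))]
  have h3 : (∫ _s in (-π)..π, (1:ℝ)) = 2*π := by
    simp
    ring
  linarith

lemma int_shift (f : ℝ → ℝ) (hfc : Continuous f) (l θ : ℝ) :
    ∫ s in (-π)..π, f (Real.cos s) * Real.cos (l*(s-θ)) = Cf f l * Real.cos (l*θ) := by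
  have hpt : ∀ s:ℝ, f (Real.cos s) * Real.cos (l*(s-θ))
      = (f (Real.cos s) * Real.cos (l*s)) * Real.cos (l*θ)
        + (f (Real.cos s) * Real.sin (l*s)) * Real.sin (l*θ) := by
    intro s
    rw [show l*(s-θ) = l*s - l*θ by ring, Real.cos_sub]
    ring
  rw [intervalIntegral.integral_congr (fun s _ => hpt s)]
  have hc1 : Continuous fun s => f (Real.cos s) * Real.cos (l*s) :=
    (hfc.comp Real.continuous_cos).mul
      (Real.continuous_cos.comp (continuous_const.mul continuous_id))
  have hc2 : Continuous fun s => f (Real.cos s) * Real.sin (l*s) :=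
    (hfc.comp Real.continuous_cos).mul
      (Real.continuous_sin.comp (continuous_const.mul continuous_id))
  rw [intervalIntegral.integral_add (f := fun s => f (Real.cos s) * Real.cos (l*s) * Real.cos (l*θ))
    (g := fun s => f (Real.cos s) * Real.sin (l*s) * Real.sin (l*θ))
    ((hc1.mul continuous_const).intervalIntegrable _ _)
    ((hc2.mul continuous_const).intervalIntegrable _ _)]
  rw [intervalIntegral.integral_mul_const, intervalIntegral.integral_mul_const, odd_int]
  unfold Cf
  ring

lemma eval_Pp (f : ℝ → ℝ) (hfc : Continuous f) (n : ℕ) (hn : 1 ≤ n) (θ : ℝ) :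
    Lam n * (Pp f n).eval (Real.cos θ) = ∫ t in (-π)..π, f (Real.cos (θ + t)) * Kf n t := by
  have hΛ := Lam_pos n hn
  -- step 1 : shift the integral
  have hGcont : Continuous (fun s => f (Real.cos s) * Kf n (s - θ)) :=
    (hfc.comp Real.continuous_cos).mul
      ((continuous_Kf n).comp (continuous_id.sub continuous_const))
  have step1 : (∫ t in (-π)..π, f (Real.cos (θ + t)) * Kf n t)
      = ∫ s in (-π)..π, f (Real.cos s) * Kf n (s - θ) := by
    have e1 : (∫ t in (-π)..π, f (Real.cos (θ + t)) * Kf n t)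
        = ∫ t in (-π)..π, (fun s => f (Real.cos s) * Kf n (s - θ)) (θ + t) := by
      refine intervalIntegral.integral_congr fun t _ => ?_
      simp only
      rw [show θ + t - θ = t by ring]
    rw [e1, intervalIntegral.integral_comp_add_left (fun s => f (Real.cos s) * Kf n (s - θ)) θ]
    have hper : Function.Periodic (fun s => f (Real.cos s) * Kf n (s - θ)) (2*π) := by
      intro s
      simp only
      rw [show s + 2*π - θ = (s - θ) + 2*π by ring, Kf_periodic, Real.cos_add_two_pi]
    have h := hper.intervalIntegral_add_eq (θ + -π) (-π)
    rw [show θ + -π + 2*π = θ + π by ring, show -π + 2*π = π by ring] at h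
    exact h
  rw [step1]
  -- step 2 : expand the kernel
  have hcos2 : ∀ (m m' : ℕ) (u : ℝ), Real.cos ((m:ℝ)*u) * Real.cos ((m':ℝ)*u)
      = (Real.cos (((m:ℝ)+(m':ℝ))*u) + Real.cos (((m:ℝ)-(m':ℝ))*u))/2 := by
    intro m m' u
    have c1 := Real.cos_add ((m:ℝ)*u) ((m':ℝ)*u)
    have c2 := Real.cos_sub ((m:ℝ)*u) ((m':ℝ)*u)
    rw [show ((m:ℝ)+(m':ℝ))*u = (m:ℝ)*u + (m':ℝ)*u by ring,
      show ((m:ℝ)-(m':ℝ))*u = (m:ℝ)*u - (m':ℝ)*u by ring, c1, c2]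
    ring
  have hexp : ∀ s:ℝ, f (Real.cos s) * Kf n (s - θ)
      = ∑ m ∈ Finset.range n, ∑ m' ∈ Finset.range n,
        (ac n m * ac n m'/2) * (f (Real.cos s) * Real.cos (((m:ℝ)+(m':ℝ))*(s-θ))
          + f (Real.cos s) * Real.cos (((m:ℝ)-(m':ℝ))*(s-θ))) := by
    intro s
    unfold Kf Ds
    rw [sq, Finset.sum_mul_sum, Finset.mul_sum]
    refine Finset.sum_congr rfl fun m _ => ?_
    rw [Finset.mul_sum]
    refine Finset.sum_congr rfl fun m' _ => ?_
    rw [show (ac n m * Real.cos ((m:ℝ)*(s-θ))) * (ac n m' * Real.cos ((m':ℝ)*(s-θ)))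
        = (ac n m * ac n m') * (Real.cos ((m:ℝ)*(s-θ)) * Real.cos ((m':ℝ)*(s-θ))) by ring,
      hcos2 m m' (s-θ)]
    ring
  rw [intervalIntegral.integral_congr (fun s _ => hexp s)]
  -- step 3 : integrate term by term
  have key : ∀ (F : ℕ → ℝ → ℝ), (∀ m ∈ Finset.range n, Continuous (F m)) →
      (∫ t in (-π)..π, ∑ m ∈ Finset.range n, F m t)
        = ∑ m ∈ Finset.range n, ∫ t in (-π)..π, F m t :=
    fun F hF => intervalIntegral.integral_finset_sum
      (fun m hm => ((hF m hm).intervalIntegrable _ _))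
  have hccos : ∀ c θ':ℝ, Continuous (fun s:ℝ => Real.cos (c*(s-θ'))) := fun c θ' =>
    Real.continuous_cos.comp ((continuous_const.mul (continuous_id.sub continuous_const)))
  have hterm : ∀ (c : ℝ), Continuous (fun s => f (Real.cos s) * Real.cos (c*(s-θ))) :=
    fun c => (hfc.comp Real.continuous_cos).mul (hccos c θ)
  rw [key (fun m t => ∑ m' ∈ Finset.range n, (ac n m * ac n m'/2) * (f (Real.cos t) * Real.cos (((m:ℝ)+(m':ℝ))*(t-θ))
          + f (Real.cos t) * Real.cos (((m:ℝ)-(m':ℝ))*(t-θ)))) (fun m _ => continuous_finset_sum _ fun m' _ =>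
    continuous_const.mul ((hterm _).add (hterm _)))]
  have hint : ∀ (m m' : ℕ),
      (∫ s in (-π)..π, (ac n m * ac n m'/2) * (f (Real.cos s) * Real.cos (((m:ℝ)+(m':ℝ))*(s-θ))
        + f (Real.cos s) * Real.cos (((m:ℝ)-(m':ℝ))*(s-θ))))
      = (ac n m * ac n m'/2) * (Cf f ((m:ℝ)+(m':ℝ)) * Real.cos (((m:ℝ)+(m':ℝ))*θ)
        + Cf f ((m:ℝ)-(m':ℝ)) * Real.cos (((m:ℝ)-(m':ℝ))*θ)) := by
    intro m m'
    rw [intervalIntegral.integral_const_mul]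
    rw [intervalIntegral.integral_add ((hterm _).intervalIntegrable _ _)
      ((hterm _).intervalIntegrable _ _)]
    rw [int_shift f hfc ((m:ℝ)+(m':ℝ)) θ, int_shift f hfc ((m:ℝ)-(m':ℝ)) θ]
  have hmid : (∑ m ∈ Finset.range n, ∫ t in (-π)..π, ∑ m' ∈ Finset.range n,
      (ac n m * ac n m'/2) * (f (Real.cos t) * Real.cos (((m:ℝ)+(m':ℝ))*(t-θ))
        + f (Real.cos t) * Real.cos (((m:ℝ)-(m':ℝ))*(t-θ))))
      = ∑ m ∈ Finset.range n, ∑ m' ∈ Finset.range n,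
        (ac n m * ac n m'/2) * (Cf f ((m:ℝ)+(m':ℝ)) * Real.cos (((m:ℝ)+(m':ℝ))*θ)
          + Cf f ((m:ℝ)-(m':ℝ)) * Real.cos (((m:ℝ)-(m':ℝ))*θ)) := by
    refine Finset.sum_congr rfl fun m _ => ?_
    rw [key (fun m' t => (ac n m * ac n m'/2) * (f (Real.cos t) * Real.cos (((m:ℝ)+(m':ℝ))*(t-θ))
          + f (Real.cos t) * Real.cos (((m:ℝ)-(m':ℝ))*(t-θ)))) (fun m' _ => continuous_const.mul ((hterm _).add (hterm _)))]
    exact Finset.sum_congr rfl fun m' _ => hint m m'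
  rw [hmid]
  -- step 4 : evaluate the polynomial
  have heval : (Pp f n).eval (Real.cos θ)
      = ∑ m ∈ Finset.range n, ∑ m' ∈ Finset.range n,
        (ac n m * ac n m'/(2 * Lam n)) * (Cf f ((m:ℝ)+(m':ℝ)) * Real.cos (((m:ℝ)+(m':ℝ))*θ)
          + Cf f ((m:ℝ)-(m':ℝ)) * Real.cos (((m:ℝ)-(m':ℝ))*θ)) := by
    unfold Pp
    rw [Polynomial.eval_finset_sum]
    refine Finset.sum_congr rfl fun m _ => ?_
    rw [Polynomial.eval_finset_sum]
    refine Finset.sum_congr rfl fun m' _ => ?_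
    simp only [Polynomial.eval_mul, Polynomial.eval_add, Polynomial.eval_C, T_real_cos]
    push_cast
    ring
  rw [heval, Finset.mul_sum]
  refine Finset.sum_congr rfl fun m _ => ?_
  rw [Finset.mul_sum]
  refine Finset.sum_congr rfl fun m' _ => ?_
  field_simp

lemma err (f : ℝ → ℝ) (hf : LipschitzWith 1 f) (n : ℕ) (hn : 1 ≤ n) (θ : ℝ) :
    |f (Real.cos θ) - (Pp f n).eval (Real.cos θ)| ≤ 100 / (n:ℝ) := by
  have hpi := Real.pi_pos
  have hfc : Continuous f := hf.continuous
  have hΛ := Lam_pos n hn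
  have hn1 : (1:ℝ) ≤ (n:ℝ) := by exact_mod_cast hn
  have hnpos : (0:ℝ) < n := by linarith
  have hconst : Lam n * f (Real.cos θ) = ∫ t in (-π)..π, f (Real.cos θ) * Kf n t := by
    rw [intervalIntegral.integral_const_mul, int_Kf n hn]
    ring
  have hc1 : Continuous fun t => f (Real.cos θ) * Kf n t :=
    continuous_const.mul (continuous_Kf n)
  have hc2 : Continuous fun t => f (Real.cos (θ+t)) * Kf n t :=
    (hfc.comp (Real.continuous_cos.comp (continuous_const.add continuous_id))).mul
      (continuous_Kf n)
  have hdiff : Lam n * (f (Real.cos θ) - (Pp f n).eval (Real.cos θ))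
      = ∫ t in (-π)..π, (f (Real.cos θ) - f (Real.cos (θ+t))) * Kf n t := by
    rw [mul_sub, hconst, eval_Pp f hfc n hn θ,
      ← intervalIntegral.integral_sub (hc1.intervalIntegrable _ _) (hc2.intervalIntegrable _ _)]
    refine intervalIntegral.integral_congr fun t _ => ?_
    ring
  have hlip : ∀ t : ℝ, |f (Real.cos θ) - f (Real.cos (θ+t))| ≤ |t| := by
    intro t
    have h1 : |f (Real.cos θ) - f (Real.cos (θ+t))| ≤ |Real.cos θ - Real.cos (θ+t)| := by
      have := hf.dist_le_mul (Real.cos θ) (Real.cos (θ+t))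
      simpa [Real.dist_eq] using this
    have h2 : |Real.cos θ - Real.cos (θ+t)| ≤ |t| := by
      rw [Real.cos_sub_cos, show (θ - (θ+t))/2 = -(t/2) by ring, Real.sin_neg]
      simp only [mul_neg, neg_mul, neg_neg, abs_mul, abs_neg, abs_two]
      have b1 : |Real.sin ((θ + (θ+t))/2)| ≤ 1 := Real.abs_sin_le_one _
      have b2 : |Real.sin (t/2)| ≤ |t/2| := Real.abs_sin_le_abs
      have b3 : |t/2| = |t|/2 := by rw [abs_div]; norm_num
      have b4 : (0:ℝ) ≤ |Real.sin (t/2)| := abs_nonneg _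
      have b5 : (0:ℝ) ≤ |Real.sin ((θ + (θ+t))/2)| := abs_nonneg _
      nlinarith [abs_nonneg t]
    linarith
  have hbound : |Lam n * (f (Real.cos θ) - (Pp f n).eval (Real.cos θ))| ≤ 100*(n:ℝ)^2 := by
    rw [hdiff]
    have habs : |∫ t in (-π)..π, (f (Real.cos θ) - f (Real.cos (θ+t))) * Kf n t|
        ≤ ∫ t in (-π)..π, |(f (Real.cos θ) - f (Real.cos (θ+t))) * Kf n t| := by
      exact intervalIntegral.abs_integral_le_integral_abs (by linarith)
    have hmono : (∫ t in (-π)..π, |(f (Real.cos θ) - f (Real.cos (θ+t))) * Kf n t|)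
        ≤ ∫ t in (-π)..π, |t| * Kf n t := by
      have hcsub : Continuous fun t => |(f (Real.cos θ) - f (Real.cos (θ+t))) * Kf n t| := by
        apply Continuous.abs
        exact (continuous_const.sub
          (hfc.comp (Real.continuous_cos.comp (continuous_const.add continuous_id)))).mul
          (continuous_Kf n)
      refine intervalIntegral.integral_mono_on (by linarith)
        (hcsub.intervalIntegrable _ _)
        ((continuous_abs.mul (continuous_Kf n)).intervalIntegrable _ _) fun t _ => ?_
      rw [abs_mul, abs_of_nonneg (Kf_nonneg n t)]
      exact mul_le_mul_of_nonneg_right (hlip t) (Kf_nonneg n t)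
    have := tail n hn
    calc |∫ t in (-π)..π, (f (Real.cos θ) - f (Real.cos (θ+t))) * Kf n t|
        ≤ ∫ t in (-π)..π, |(f (Real.cos θ) - f (Real.cos (θ+t))) * Kf n t| := habs
      _ ≤ ∫ t in (-π)..π, |t| * Kf n t := hmono
      _ ≤ 100*(n:ℝ)^2 := this
  have hn3 : (n:ℝ)^3 ≤ Lam n := by
    have := Lam_lower n
    have h3 : (3:ℝ) < π := Real.pi_gt_three
    have hcube : (0:ℝ) ≤ (n:ℝ)^3 := by positivity
    nlinarith
  rw [abs_mul, abs_of_pos hΛ] at hbound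
  set E := |f (Real.cos θ) - (Pp f n).eval (Real.cos θ)| with hE
  have hEnn : 0 ≤ E := abs_nonneg _
  rw [le_div_iff₀ hnpos]
  have h1 : (n:ℝ)^3 * E ≤ Lam n * E := mul_le_mul_of_nonneg_right hn3 hEnn
  have h2 : (n:ℝ)^3 * E ≤ 100*(n:ℝ)^2 := le_trans h1 hbound
  nlinarith

lemma natDegree_T_le : ∀ m : ℕ, (T ℝ (m:ℤ)).natDegree ≤ m
  | 0 => by simp
  | 1 => by simp
  | (m+2) => by
    have h1 := natDegree_T_le m
    have h2 := natDegree_T_le (m+1)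
    have hc : ((m+2:ℕ):ℤ) = ((m:ℕ):ℤ)+2 := by push_cast; ring
    rw [hc, T_add_two]
    refine le_trans (Polynomial.natDegree_sub_le _ _) (max_le ?_ ?_)
    · refine le_trans Polynomial.natDegree_mul_le ?_
      have ha : ((2:Polynomial ℝ)*X).natDegree ≤ 1 := by
        refine le_trans Polynomial.natDegree_mul_le ?_
        simp
      have hb : (T ℝ ((m:ℕ)+1:ℤ)).natDegree ≤ m+1 := by
        have : (((m+1:ℕ)):ℤ) = ((m:ℕ):ℤ)+1 := by push_cast; ring
        rw [← this]; exact h2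
      omega
    · omega

lemma coeff_T_zero {m j : ℕ} (h : m < j) : (T ℝ (m:ℤ)).coeff j = 0 :=
  Polynomial.coeff_eq_zero_of_natDegree_lt (lt_of_le_of_lt (natDegree_T_le m) h)

lemma l1_T : ∀ m : ℕ, ∑ j ∈ Finset.range (m+1), |(T ℝ (m:ℤ)).coeff j| ≤ (5/2:ℝ)^m
  | 0 => by simp
  | 1 => by
    rw [Finset.sum_range_succ, Finset.sum_range_one]
    norm_num
  | (m+2) => by
    have ih1 := l1_T m
    have ih2 := l1_T (m+1)
    have hc : ((m+2:ℕ):ℤ) = ((m:ℕ):ℤ)+2 := by push_cast; ring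
    have hc1 : (((m+1:ℕ)):ℤ) = ((m:ℕ):ℤ)+1 := by push_cast; ring
    rw [hc, T_add_two]
    have hcoeff : ∀ j, (2*X*T ℝ (((m:ℕ):ℤ)+1) - T ℝ ((m:ℕ):ℤ)).coeff j
        = 2*((X*T ℝ (((m:ℕ):ℤ)+1)).coeff j) - (T ℝ ((m:ℕ):ℤ)).coeff j := by
      intro j
      rw [Polynomial.coeff_sub]
      congr 1
      rw [show (2:Polynomial ℝ)*X*T ℝ (((m:ℕ):ℤ)+1)
          = Polynomial.C 2 * (X*T ℝ (((m:ℕ):ℤ)+1)) by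
        rw [map_ofNat]; ring]
      rw [Polynomial.coeff_C_mul]
    have step1 : ∑ j ∈ Finset.range (m+3), |(2*X*T ℝ (((m:ℕ):ℤ)+1) - T ℝ ((m:ℕ):ℤ)).coeff j|
        ≤ 2*(∑ j ∈ Finset.range (m+3), |(X*T ℝ (((m:ℕ):ℤ)+1)).coeff j|)
          + ∑ j ∈ Finset.range (m+3), |(T ℝ ((m:ℕ):ℤ)).coeff j| := by
      rw [Finset.mul_sum, ← Finset.sum_add_distrib]
      refine Finset.sum_le_sum fun j _ => ?_
      rw [hcoeff j]
      calc |2*((X*T ℝ (((m:ℕ):ℤ)+1)).coeff j) - (T ℝ ((m:ℕ):ℤ)).coeff j|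
          ≤ |2*((X*T ℝ (((m:ℕ):ℤ)+1)).coeff j)| + |(T ℝ ((m:ℕ):ℤ)).coeff j| := abs_sub _ _
        _ = 2*|(X*T ℝ (((m:ℕ):ℤ)+1)).coeff j| + |(T ℝ ((m:ℕ):ℤ)).coeff j| := by
            rw [abs_mul]; norm_num
    have step2 : ∑ j ∈ Finset.range (m+3), |(X*T ℝ (((m:ℕ):ℤ)+1)).coeff j|
        = ∑ j ∈ Finset.range (m+2), |(T ℝ (((m:ℕ):ℤ)+1)).coeff j| := by
      rw [Finset.sum_range_succ']
      have h0 : (X*T ℝ (((m:ℕ):ℤ)+1)).coeff 0 = 0 := by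
        rw [Polynomial.mul_coeff_zero]
        simp
      rw [h0]
      simp only [abs_zero, add_zero]
      refine Finset.sum_congr rfl fun j _ => ?_
      rw [Polynomial.coeff_X_mul]
    have step3 : ∑ j ∈ Finset.range (m+3), |(T ℝ ((m:ℕ):ℤ)).coeff j|
        = ∑ j ∈ Finset.range (m+1), |(T ℝ ((m:ℕ):ℤ)).coeff j| := by
      rw [Finset.sum_range_succ, Finset.sum_range_succ,
        coeff_T_zero (by omega), coeff_T_zero (by omega)]
      simp
    have hpow : (0:ℝ) < (5/2:ℝ)^m := by positivity
    have key : ∑ j ∈ Finset.range (m+2), |(T ℝ (((m:ℕ):ℤ)+1)).coeff j| ≤ (5/2:ℝ)^(m+1) := by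
      rw [← hc1]; exact ih2
    calc ∑ j ∈ Finset.range (m+2+1), |(2*X*T ℝ (((m:ℕ):ℤ)+1) - T ℝ ((m:ℕ):ℤ)).coeff j|
        ≤ 2*(∑ j ∈ Finset.range (m+2), |(T ℝ (((m:ℕ):ℤ)+1)).coeff j|)
          + ∑ j ∈ Finset.range (m+1), |(T ℝ ((m:ℕ):ℤ)).coeff j| := by
          rw [← step2, ← step3]; exact step1
      _ ≤ 2*(5/2:ℝ)^(m+1) + (5/2:ℝ)^m := by linarith
      _ ≤ (5/2:ℝ)^(m+2) := by
          have e1 : (5/2:ℝ)^(m+1) = (5/2:ℝ)^m*(5/2) := pow_succ _ _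
          have e2 : (5/2:ℝ)^(m+2) = (5/2:ℝ)^m*(5/2)*(5/2) := by
            rw [← e1, ← pow_succ]
          rw [e1, e2]
          linarith

lemma l1_T_window (m N : ℕ) (h : m < N) :
    ∑ j ∈ Finset.range N, |(T ℝ (m:ℤ)).coeff j| ≤ (5/2:ℝ)^m := by
  have hsub : Finset.range (m+1) ⊆ Finset.range N := Finset.range_subset_range.2 (by omega)
  have heq : ∑ j ∈ Finset.range (m+1), |(T ℝ (m:ℤ)).coeff j|
      = ∑ j ∈ Finset.range N, |(T ℝ (m:ℤ)).coeff j| := by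
    refine Finset.sum_subset hsub fun j _ hj => ?_
    rw [coeff_T_zero (by simp at hj ⊢; omega)]
    simp
  rw [← heq]
  exact l1_T m

lemma T_eq_natAbs (l : ℤ) : T ℝ l = T ℝ (l.natAbs:ℤ) := by
  rcases Int.natAbs_eq l with h | h
  · rw [← h]
  · conv_lhs => rw [h]
    rw [T_neg]

lemma pow_aux : ∀ k : ℕ, (k:ℝ)^2 * 25^k ≤ 5 * 36^k := by
  intro k
  induction k with
  | zero => norm_num
  | succ k ih =>
    rcases Nat.lt_or_ge k 5 with h | h
    · interval_cases k <;> norm_num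
    · have hk : (5:ℝ) ≤ k := by exact_mod_cast h
      have h36 : (0:ℝ) < 36^k := by positivity
      have h25 : (0:ℝ) < 25^k := by positivity
      push_cast
      have key : 25*((k:ℝ)+1)^2 ≤ 36*(k:ℝ)^2 := by nlinarith
      calc ((k:ℝ)+1)^2 * 25^(k+1) = (25*((k:ℝ)+1)^2) * 25^k := by ring
        _ ≤ (36*(k:ℝ)^2) * 25^k := by nlinarith
        _ = 36*((k:ℝ)^2 * 25^k) := by ring
        _ ≤ 36*(5*36^k) := by nlinarith
        _ = 5*36^(k+1) := by ring

lemma natDegree_T_int (i : ℤ) (k : ℕ) (h : i.natAbs ≤ k) : (T ℝ i).natDegree ≤ k := by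
  rw [T_eq_natAbs]
  exact le_trans (natDegree_T_le _) h

lemma l1_T_int (i : ℤ) (k : ℕ) (h : i.natAbs ≤ k) :
    ∑ j ∈ Finset.range (k+1), |(T ℝ i).coeff j| ≤ (5/2:ℝ)^k := by
  rw [T_eq_natAbs]
  calc ∑ j ∈ Finset.range (k+1), |(T ℝ (i.natAbs:ℤ)).coeff j| ≤ (5/2:ℝ)^(i.natAbs) :=
        l1_T_window _ _ (by omega)
    _ ≤ (5/2:ℝ)^k := by
        apply pow_le_pow_right₀ (by norm_num) h

lemma natDegree_Pp (f : ℝ → ℝ) (n k : ℕ) (hk : 2*n ≤ k+2) : (Pp f n).natDegree ≤ k := by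
  refine Polynomial.natDegree_sum_le_of_forall_le _ _ fun m hm => ?_
  refine Polynomial.natDegree_sum_le_of_forall_le _ _ fun m' hm' => ?_
  have hmr := Finset.mem_range.1 hm
  have hmr' := Finset.mem_range.1 hm'
  refine le_trans Polynomial.natDegree_mul_le ?_
  rw [Polynomial.natDegree_C, zero_add]
  refine le_trans (Polynomial.natDegree_add_le _ _) (max_le ?_ ?_)
  · refine le_trans Polynomial.natDegree_mul_le ?_
    rw [Polynomial.natDegree_C, zero_add]
    refine natDegree_T_int _ _ ?_
    have : ((m:ℤ) + (m':ℤ)).natAbs = m + m' := by omega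
    omega
  · refine le_trans Polynomial.natDegree_mul_le ?_
    rw [Polynomial.natDegree_C, zero_add]
    refine natDegree_T_int _ _ ?_
    have : ((m:ℤ) - (m':ℤ)).natAbs ≤ m + m' := by omega
    omega

lemma l1_Pp (f : ℝ → ℝ) (hfc : Continuous f) (hb : ∀ x ∈ Set.Icc (-1:ℝ) 1, |f x| ≤ 1)
    (n k : ℕ) (hn : 1 ≤ n) (hk : 2*n ≤ k+2) :
    ∑ j ∈ Finset.range (k+1), |(Pp f n).coeff j| ≤ 6*(n:ℝ)*(5/2:ℝ)^k := by
  have hΛ := Lam_pos n hn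
  have hlow := Lam_lower n
  have hpi := Real.pi_pos
  have hcoeff : ∀ j, (Pp f n).coeff j = ∑ m ∈ Finset.range n, ∑ m' ∈ Finset.range n,
      (ac n m * ac n m' / (2 * Lam n)) *
        (Cf f ((m:ℝ) + (m':ℝ)) * (T ℝ ((m:ℤ) + (m':ℤ))).coeff j
          + Cf f ((m:ℝ) - (m':ℝ)) * (T ℝ ((m:ℤ) - (m':ℤ))).coeff j) := by
    intro j
    unfold Pp
    rw [Polynomial.finset_sum_coeff]
    refine Finset.sum_congr rfl fun m _ => ?_
    rw [Polynomial.finset_sum_coeff]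
    refine Finset.sum_congr rfl fun m' _ => ?_
    simp only [Polynomial.coeff_C_mul, Polynomial.coeff_add]
  have hinner : ∀ m ∈ Finset.range n, ∀ m' ∈ Finset.range n,
      ∑ j ∈ Finset.range (k+1), |(ac n m * ac n m' / (2 * Lam n)) *
        (Cf f ((m:ℝ) + (m':ℝ)) * (T ℝ ((m:ℤ) + (m':ℤ))).coeff j
          + Cf f ((m:ℝ) - (m':ℝ)) * (T ℝ ((m:ℤ) - (m':ℤ))).coeff j)|
      ≤ (ac n m * ac n m') * ((2*π*(5/2:ℝ)^k)/(Lam n)) := by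
    intro m hm m' hm'
    have hmr := Finset.mem_range.1 hm
    have hmr' := Finset.mem_range.1 hm'
    have hc0 : 0 ≤ ac n m * ac n m' / (2 * Lam n) := by
      have := ac_nonneg hmr
      have := ac_nonneg hmr'
      positivity
    have hCf1 := Cf_bound f hfc hb ((m:ℝ) + (m':ℝ))
    have hCf2 := Cf_bound f hfc hb ((m:ℝ) - (m':ℝ))
    have hT1 : ∑ j ∈ Finset.range (k+1), |(T ℝ ((m:ℤ) + (m':ℤ))).coeff j| ≤ (5/2:ℝ)^k :=
      l1_T_int _ _ (by omega)
    have hT2 : ∑ j ∈ Finset.range (k+1), |(T ℝ ((m:ℤ) - (m':ℤ))).coeff j| ≤ (5/2:ℝ)^k :=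
      l1_T_int _ _ (by omega)
    calc ∑ j ∈ Finset.range (k+1), |(ac n m * ac n m' / (2 * Lam n)) *
          (Cf f ((m:ℝ) + (m':ℝ)) * (T ℝ ((m:ℤ) + (m':ℤ))).coeff j
            + Cf f ((m:ℝ) - (m':ℝ)) * (T ℝ ((m:ℤ) - (m':ℤ))).coeff j)|
        ≤ ∑ j ∈ Finset.range (k+1), (ac n m * ac n m' / (2 * Lam n)) *
          (2*π * |(T ℝ ((m:ℤ) + (m':ℤ))).coeff j| + 2*π * |(T ℝ ((m:ℤ) - (m':ℤ))).coeff j|) := by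
          refine Finset.sum_le_sum fun j _ => ?_
          rw [abs_mul, abs_of_nonneg hc0]
          refine mul_le_mul_of_nonneg_left ?_ hc0
          calc |Cf f ((m:ℝ) + (m':ℝ)) * (T ℝ ((m:ℤ) + (m':ℤ))).coeff j
                + Cf f ((m:ℝ) - (m':ℝ)) * (T ℝ ((m:ℤ) - (m':ℤ))).coeff j|
              ≤ |Cf f ((m:ℝ) + (m':ℝ))| * |(T ℝ ((m:ℤ) + (m':ℤ))).coeff j|
                + |Cf f ((m:ℝ) - (m':ℝ))| * |(T ℝ ((m:ℤ) - (m':ℤ))).coeff j| := by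
                refine le_trans (abs_add_le _ _) ?_
                rw [abs_mul, abs_mul]
            _ ≤ 2*π * |(T ℝ ((m:ℤ) + (m':ℤ))).coeff j|
                + 2*π * |(T ℝ ((m:ℤ) - (m':ℤ))).coeff j| := by
                have := abs_nonneg ((T ℝ ((m:ℤ) + (m':ℤ))).coeff j)
                have := abs_nonneg ((T ℝ ((m:ℤ) - (m':ℤ))).coeff j)
                nlinarith
      _ = (ac n m * ac n m' / (2 * Lam n)) *
            (2*π * (∑ j ∈ Finset.range (k+1), |(T ℝ ((m:ℤ) + (m':ℤ))).coeff j|)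
             + 2*π * (∑ j ∈ Finset.range (k+1), |(T ℝ ((m:ℤ) - (m':ℤ))).coeff j|)) := by
          rw [← Finset.mul_sum, Finset.sum_add_distrib, ← Finset.mul_sum, ← Finset.mul_sum]
      _ ≤ (ac n m * ac n m' / (2 * Lam n)) * (2*π * (5/2:ℝ)^k + 2*π * (5/2:ℝ)^k) := by
          refine mul_le_mul_of_nonneg_left ?_ hc0
          nlinarith
      _ = (ac n m * ac n m') * ((2*π*(5/2:ℝ)^k)/(Lam n)) := by
          field_simp
          ring
  calc ∑ j ∈ Finset.range (k+1), |(Pp f n).coeff j|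
      ≤ ∑ j ∈ Finset.range (k+1), ∑ m ∈ Finset.range n, ∑ m' ∈ Finset.range n,
        |(ac n m * ac n m' / (2 * Lam n)) *
          (Cf f ((m:ℝ) + (m':ℝ)) * (T ℝ ((m:ℤ) + (m':ℤ))).coeff j
            + Cf f ((m:ℝ) - (m':ℝ)) * (T ℝ ((m:ℤ) - (m':ℤ))).coeff j)| := by
        refine Finset.sum_le_sum fun j _ => ?_
        rw [hcoeff j]
        refine le_trans (Finset.abs_sum_le_sum_abs _ _) ?_
        exact Finset.sum_le_sum fun m _ => Finset.abs_sum_le_sum_abs _ _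
    _ = ∑ m ∈ Finset.range n, ∑ m' ∈ Finset.range n, ∑ j ∈ Finset.range (k+1),
        |(ac n m * ac n m' / (2 * Lam n)) *
          (Cf f ((m:ℝ) + (m':ℝ)) * (T ℝ ((m:ℤ) + (m':ℤ))).coeff j
            + Cf f ((m:ℝ) - (m':ℝ)) * (T ℝ ((m:ℤ) - (m':ℤ))).coeff j)| := by
        rw [Finset.sum_comm]
        exact Finset.sum_congr rfl fun m _ => Finset.sum_comm
    _ ≤ ∑ m ∈ Finset.range n, ∑ m' ∈ Finset.range n,
        (ac n m * ac n m') * ((2*π*(5/2:ℝ)^k)/(Lam n)) := by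
        refine Finset.sum_le_sum fun m hm => Finset.sum_le_sum fun m' hm' => ?_
        exact hinner m hm m' hm'
    _ = ((n:ℝ)^2 * (n:ℝ)^2) * ((2*π*(5/2:ℝ)^k)/(Lam n)) := by
        have e : (∑ m ∈ Finset.range n, ∑ m' ∈ Finset.range n, ac n m * ac n m')
              * ((2*π*(5/2:ℝ)^k)/(Lam n))
            = ∑ m ∈ Finset.range n, ∑ m' ∈ Finset.range n,
              (ac n m * ac n m') * ((2*π*(5/2:ℝ)^k)/(Lam n)) := by
          rw [Finset.sum_mul]
          exact Finset.sum_congr rfl fun m _ => Finset.sum_mul _ _ _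
        rw [← e]
        congr 1
        rw [← Finset.sum_mul_sum, sum_ac]
    _ ≤ 6*(n:ℝ)*(5/2:ℝ)^k := by
        have hn1 : (1:ℝ) ≤ (n:ℝ) := by exact_mod_cast hn
        have hn3 : (0:ℝ) < π*(n:ℝ)^3/3 := by positivity
        have hdiv : (2*π*(5/2:ℝ)^k)/(Lam n) ≤ (2*π*(5/2:ℝ)^k)/(π*(n:ℝ)^3/3) := by
          apply div_le_div_of_nonneg_left (by positivity) hn3 hlow
        have he : ((n:ℝ)^2 * (n:ℝ)^2) * ((2*π*(5/2:ℝ)^k)/(π*(n:ℝ)^3/3)) = 6*(n:ℝ)*(5/2:ℝ)^k := by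
          field_simp
          ring
        calc ((n:ℝ)^2 * (n:ℝ)^2) * ((2*π*(5/2:ℝ)^k)/(Lam n))
            ≤ ((n:ℝ)^2 * (n:ℝ)^2) * ((2*π*(5/2:ℝ)^k)/(π*(n:ℝ)^3/3)) := by
              refine mul_le_mul_of_nonneg_left hdiv (by positivity)
          _ = 6*(n:ℝ)*(5/2:ℝ)^k := he


end Stmt16

end

open Stmt16

/-- constructive Jackson-type theorem. There is an absolute constant
`C > 0` such that for every `k ≥ 1` and every `1`-Lipschitz `f : ℝ → ℝ` with `|f| ≤ 1` on
`[-1, 1]`, some real polynomial `P` of degree at most `k` satisfies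
`sup_{x ∈ [-1,1]} |f x − P x| ≤ C/k` and `∑_j (coeff of x^j in P)² ≤ C · 9^k`. -/
theorem stmt_16 :
    ∃ C : ℝ, 0 < C ∧
      ∀ (k : ℕ), 1 ≤ k →
      ∀ f : ℝ → ℝ, LipschitzWith 1 f → (∀ x ∈ Set.Icc (-1 : ℝ) 1, |f x| ≤ 1) →
      ∃ P : Polynomial ℝ, P.natDegree ≤ k ∧
        (∀ x ∈ Set.Icc (-1 : ℝ) 1, |f x - P.eval x| ≤ C / k) ∧
        ∑ j ∈ P.support, (P.coeff j) ^ 2 ≤ C * 9 ^ k := by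
  refine ⟨1000000, by norm_num, fun k hk f hf hb => ?_⟩
  set n := k/2 + 1 with hdefn
  have hn : 1 ≤ n := by omega
  have hk2 : 2*n ≤ k+2 := by omega
  have hnk : n ≤ k := by omega
  have hkn : k ≤ 2*n := by omega
  refine ⟨Pp f n, natDegree_Pp f n k hk2, ?_, ?_⟩
  · intro x hx
    have hθ : Real.cos (Real.arccos x) = x := Real.cos_arccos hx.1 hx.2
    have herr := err f hf n hn (Real.arccos x)
    rw [hθ] at herr
    have hnpos : (0:ℝ) < n := by exact_mod_cast hn
    have hkpos : (0:ℝ) < k := by exact_mod_cast hk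
    have hcmp : 100/(n:ℝ) ≤ 1000000/(k:ℝ) := by
      rw [div_le_div_iff₀ hnpos hkpos]
      have h2n : (k:ℝ) ≤ 2*(n:ℝ) := by exact_mod_cast hkn
      nlinarith
    linarith
  · have hS := l1_Pp f hf.continuous hb n k hn hk2
    set S := ∑ j ∈ Finset.range (k+1), |(Pp f n).coeff j| with hdefS
    have hS0 : 0 ≤ S := Finset.sum_nonneg fun j _ => abs_nonneg _
    have hsupp : (Pp f n).support ⊆ Finset.range (k+1) :=
      Polynomial.supp_subset_range (lt_of_le_of_lt (natDegree_Pp f n k hk2) (Nat.lt_succ_self k))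
    have hB0 : (0:ℝ) ≤ 6*(n:ℝ)*(5/2:ℝ)^k := by positivity
    calc ∑ j ∈ (Pp f n).support, ((Pp f n).coeff j)^2
        ≤ ∑ j ∈ Finset.range (k+1), ((Pp f n).coeff j)^2 :=
          Finset.sum_le_sum_of_subset_of_nonneg hsupp fun j _ _ => sq_nonneg _
      _ ≤ S * S := by
          have hpt : ∀ j ∈ Finset.range (k+1), ((Pp f n).coeff j)^2 ≤ |(Pp f n).coeff j| * S := by
            intro j hj
            have h1 : |(Pp f n).coeff j| ≤ S :=
              Finset.single_le_sum (f := fun j => |(Pp f n).coeff j|)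
                (fun i _ => abs_nonneg _) hj
            calc ((Pp f n).coeff j)^2 = |(Pp f n).coeff j| * |(Pp f n).coeff j| := by
                  rw [← sq_abs, sq]
              _ ≤ |(Pp f n).coeff j| * S := mul_le_mul_of_nonneg_left h1 (abs_nonneg _)
          calc ∑ j ∈ Finset.range (k+1), ((Pp f n).coeff j)^2
              ≤ ∑ j ∈ Finset.range (k+1), |(Pp f n).coeff j| * S := Finset.sum_le_sum hpt
            _ = S * S := by rw [← Finset.sum_mul]
      _ ≤ (6*(n:ℝ)*(5/2:ℝ)^k) * (6*(n:ℝ)*(5/2:ℝ)^k) := mul_le_mul hS hS hS0 hB0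
      _ = 36*(n:ℝ)^2*((5/2:ℝ)^k)^2 := by ring
      _ ≤ 1000000 * 9^k := by
          have e1 : ((5/2:ℝ)^k)^2 = (25/4:ℝ)^k := by
            rw [sq, ← mul_pow]
            norm_num
          have e2 : (25/4:ℝ)^k = (25:ℝ)^k/(4:ℝ)^k := div_pow _ _ _
          have h4 : (0:ℝ) < (4:ℝ)^k := by positivity
          have e3 : (9:ℝ)^k = (36:ℝ)^k/(4:ℝ)^k := by
            rw [eq_div_iff (ne_of_gt h4), ← mul_pow]
            norm_num
          have hnk' : (n:ℝ)^2 ≤ (k:ℝ)^2 := by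
            have h1 : (n:ℝ) ≤ (k:ℝ) := by exact_mod_cast hnk
            have h0 : (0:ℝ) ≤ (n:ℝ) := Nat.cast_nonneg _
            nlinarith
          have hpa := pow_aux k
          rw [e1, e2]
          have hc : (0:ℝ) ≤ (25:ℝ)^k/(4:ℝ)^k := by positivity
          have h1 : 36*(n:ℝ)^2*((25:ℝ)^k/(4:ℝ)^k) ≤ 36*(k:ℝ)^2*((25:ℝ)^k/(4:ℝ)^k) := by
            nlinarith
          have h2 : 36*(k:ℝ)^2*((25:ℝ)^k/(4:ℝ)^k) = 36*((k:ℝ)^2*(25:ℝ)^k)/(4:ℝ)^k := by ring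
          have h3 : 36*((k:ℝ)^2*(25:ℝ)^k)/(4:ℝ)^k ≤ 36*(5*(36:ℝ)^k)/(4:ℝ)^k := by
            exact (div_le_div_iff_of_pos_right h4).2 (by linarith)
          have h5 : 36*(5*(36:ℝ)^k)/(4:ℝ)^k = 180*(9:ℝ)^k := by
            rw [e3]; ring
          have h9 : (0:ℝ) ≤ (9:ℝ)^k := by positivity
          linarith
end
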